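/- arXiv:2412.20401 — 4 statements merged into one kernel-verified Lean document; each statement's English description precedes it below -/
import Mathlib

section
/- In the category P of finite paths with edge-preserving co-bijective relations as morphisms, the non-edge-injective morphisms form an ideal: for any ⊐ ∈ P^R_Q and ⊵ ∈ P^S_R, if either ⊐ or ⊵ fails to be edge-injective then so does the composition ⊵ ∘ ⊐. -/
namespace PathCat

/-- The edge relation on the standard path `P_n` with vertices `Fin (n+1)`:
`i ⊓ j` iff `|i − j| ≤ 1` (reflexive and symmetric). -/
def AdjF {n : ℕ} (i j : Fin (n + 1)) : Prop := (i : ℕ) ≤ (j : ℕ) + 1 ∧ (j : ℕ) ≤ (i : ℕ) + 1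

/-- Edge-preserving relation (as a subset of codomain × domain):
`⊐ ∘ ⊓ ∘ ⊏ ⊆ ⊓`. -/
def EdgePresRel {m n : ℕ} (R : Fin (n + 1) → Fin (m + 1) → Prop) : Prop :=
  ∀ i j k l, R i k → AdjF k l → R j l → AdjF i j

/-- Co-surjective: every element of the domain is related to something. -/
def CoSurjRel {m n : ℕ} (R : Fin (n + 1) → Fin (m + 1) → Prop) : Prop := ∀ k, ∃ i, R i k

/-- Co-injective: every element of the codomain is the sole image of some element. -/
def CoInjRel {m n : ℕ} (R : Fin (n + 1) → Fin (m + 1) → Prop) : Prop :=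
  ∀ i, ∃ k, ∀ i', R i' k ↔ i' = i

/-- A morphism of the path category `P`: an edge-preserving co-bijective relation
from `P_m` to `P_n` (subset of `P_n × P_m`). -/
def IsMorRel {m n : ℕ} (R : Fin (n + 1) → Fin (m + 1) → Prop) : Prop :=
  EdgePresRel R ∧ CoSurjRel R ∧ CoInjRel R

/-- Relational composition. -/
def compRel {m n l : ℕ} (S : Fin (l + 1) → Fin (n + 1) → Prop)
    (R : Fin (n + 1) → Fin (m + 1) → Prop) : Fin (l + 1) → Fin (m + 1) → Prop :=
  fun a c => ∃ b, S a b ∧ R b c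

/-- Isomorphism in the path category. -/
def IsIsoRel {m n : ℕ} (R : Fin (n + 1) → Fin (m + 1) → Prop) : Prop :=
  IsMorRel R ∧ ∃ S : Fin (m + 1) → Fin (n + 1) → Prop, IsMorRel S ∧
    (∀ a c, compRel R S a c ↔ a = c) ∧ (∀ a c, compRel S R a c ↔ a = c)

/-- Prime morphism: not an isomorphism, but any factorization into two morphisms
forces one factor to be an isomorphism. -/
def IsPrimeRel {m n : ℕ} (R : Fin (n + 1) → Fin (m + 1) → Prop) : Prop :=
  IsMorRel R ∧ ¬ IsIsoRel R ∧
    ∀ (k : ℕ) (S : Fin (n + 1) → Fin (k + 1) → Prop) (T : Fin (k + 1) → Fin (m + 1) → Prop),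
      IsMorRel S → IsMorRel T → (∀ a c, R a c ↔ compRel S T a c) → IsIsoRel S ∨ IsIsoRel T

/-- Edge-injective morphism: on every edge of the domain, the relation restricts to
an injective function with distinct singleton images. -/
def EdgeInjRel {m n : ℕ} (R : Fin (n + 1) → Fin (m + 1) → Prop) : Prop :=
  ∀ k l : Fin (m + 1), AdjF k l → k ≠ l →
    ∃ i j, i ≠ j ∧ (∀ i', R i' k ↔ i' = i) ∧ (∀ j', R j' l ↔ j' = j)

/-- Morphisms of the category `F`: edge-preserving surjective functions. -/
def IsMorF {m n : ℕ} (f : Fin (m + 1) → Fin (n + 1)) : Prop :=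
  Function.Surjective f ∧ ∀ a b, AdjF a b → AdjF (f a) (f b)

/-- Isomorphism in `F`. -/
def IsIsoF {m n : ℕ} (f : Fin (m + 1) → Fin (n + 1)) : Prop :=
  IsMorF f ∧ ∃ g : Fin (n + 1) → Fin (m + 1), IsMorF g ∧
    (∀ a, g (f a) = a) ∧ ∀ b, f (g b) = b

/-- Prime morphism in `F`. -/
def IsPrimeF {m n : ℕ} (f : Fin (m + 1) → Fin (n + 1)) : Prop :=
  IsMorF f ∧ ¬ IsIsoF f ∧
    ∀ (k : ℕ) (g : Fin (k + 1) → Fin (n + 1)) (h : Fin (m + 1) → Fin (k + 1)),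
      IsMorF g → IsMorF h → (∀ a, f a = g (h a)) → IsIsoF g ∨ IsIsoF h

/-- An edge-injective morphism of paths: an edge-preserving surjective function
mapping each edge of the domain onto an edge of the codomain. -/
def IsEdgeInjFun {m n : ℕ} (f : Fin (m + 1) → Fin (n + 1)) : Prop :=
  Function.Surjective f ∧ (∀ a b : Fin (m + 1), AdjF a b → AdjF (f a) (f b)) ∧
    ∀ a b : Fin (m + 1), (a : ℕ) + 1 = (b : ℕ) → f a ≠ f b

/-- The turning number: the number of length-two subpaths mapped onto an edge. -/
noncomputable def turningNumber {m n : ℕ} (f : Fin (m + 1) → Fin (n + 1)) : ℕ :=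
  Set.ncard {b : Fin (m + 1) | ∃ a c : Fin (m + 1),
    (a : ℕ) + 1 = (b : ℕ) ∧ (b : ℕ) + 1 = (c : ℕ) ∧ f a = f c}

/-- Proper function: no restriction to a proper subpath is still surjective. -/
def ProperFun {m n : ℕ} (f : Fin (m + 1) → Fin (n + 1)) : Prop :=
  ∀ a b : Fin (m + 1), a ≤ b → (∀ j, ∃ k, a ≤ k ∧ k ≤ b ∧ f k = j) →
    ((a : ℕ) = 0 ∧ (b : ℕ) = m)

/-- Composite of a chain of morphisms `F i : P_{d i} → P_{d (i+1)}`. -/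
def chainComp (d : ℕ → ℕ) (F : ∀ i : ℕ, Fin (d (i + 1) + 1) → Fin (d i + 1) → Prop) :
    ∀ k : ℕ, Fin (d k + 1) → Fin (d 0 + 1) → Prop
  | 0 => fun a c => a = c
  | k + 1 => fun a c => ∃ b, F k a b ∧ chainComp d F k b c

end PathCat

private lemma crossUp (g : ℕ → ℕ) (h1 : ∀ s, g (s+1) ≤ g s + 1)
    (p : ℕ) : ∀ d a, g a ≤ p → p + 1 ≤ g (a + d) →
    ∃ s, a ≤ s ∧ s + 1 ≤ a + d ∧ g s = p ∧ g (s+1) = p + 1 := by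
  intro d
  induction d with
  | zero => intro a ha hb'; have hb : p + 1 ≤ g a := hb'; omega
  | succ d ih =>
    intro a ha hb'
    have hb : p + 1 ≤ g (a + d + 1) := hb'
    by_cases hc : p + 1 ≤ g (a + d)
    · obtain ⟨s, hs1, hs2, hs3⟩ := ih a ha hc
      exact ⟨s, hs1, by omega, hs3⟩
    · have hs := h1 (a + d)
      exact ⟨a + d, by omega, by omega, by omega, by omega⟩

private lemma crossDown (g : ℕ → ℕ) (h2 : ∀ s, g s ≤ g (s+1) + 1)
    (p : ℕ) : ∀ d a, p + 1 ≤ g a → g (a + d) ≤ p →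
    ∃ s, a ≤ s ∧ s + 1 ≤ a + d ∧ g s = p + 1 ∧ g (s+1) = p := by
  intro d
  induction d with
  | zero => intro a ha hb'; have hb : g a ≤ p := hb'; omega
  | succ d ih =>
    intro a ha hb'
    have hb : g (a + d + 1) ≤ p := hb'
    by_cases hc : g (a + d) ≤ p
    · obtain ⟨s, hs1, hs2, hs3⟩ := ih a ha hc
      exact ⟨s, hs1, by omega, hs3⟩
    · have hs := h2 (a + d)
      exact ⟨a + d, by omega, by omega, by omega, by omega⟩


open PathCat in
/-- The non-edge-injective morphisms form an ideal in the path category. -/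
theorem stmt15 {m n l : ℕ} (R : Fin (n + 1) → Fin (m + 1) → Prop)
    (T : Fin (l + 1) → Fin (n + 1) → Prop) (hR : IsMorRel R) (hT : IsMorRel T)
    (h : ¬ EdgeInjRel R ∨ ¬ EdgeInjRel T) : ¬ EdgeInjRel (compRel T R) := by
  rintro hC
  obtain ⟨hRE, hRS, hRI⟩ := hR
  obtain ⟨hTE, hTS, hTI⟩ := hT
  -- fibers of R over vertices lying on an edge are subsingletons
  have fibsub : ∀ k l : Fin (m+1), AdjF k l → k ≠ l →
      ∀ i i' : Fin (n+1), R i k → R i' k → i = i' := by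
    intro k l hadj hne i i' hi hi'
    by_contra hii
    obtain ⟨a, b, hab, ha, hb⟩ := hC k l hadj hne
    obtain ⟨a1, ha1⟩ := hTS i
    have e1 : a1 = a := (ha a1).mp ⟨i, ha1, hi⟩
    obtain ⟨a2, ha2⟩ := hTS i'
    have e2 : a2 = a := (ha a2).mp ⟨i', ha2, hi'⟩
    have hTai : T a i := e1 ▸ ha1
    have hTai' : T a i' := e2 ▸ ha2
    have hkk : AdjF k k := ⟨Nat.le_succ _, Nat.le_succ _⟩
    have hadji : AdjF i i' := hRE i i' k k hi hkk hi'
    obtain ⟨j, hj⟩ := hRS l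
    have hij : AdjF i j := hRE i j k l hi hadj hj
    have hij' : AdjF i' j := hRE i' j k l hi' hadj hj
    have hvne : (i : ℕ) ≠ (i' : ℕ) := fun hv => hii (Fin.ext hv)
    have hjv : (j : ℕ) = (i : ℕ) ∨ (j : ℕ) = (i' : ℕ) := by
      obtain ⟨u1, u2⟩ := hadji; obtain ⟨v1, v2⟩ := hij; obtain ⟨w1, w2⟩ := hij'
      omega
    have hTaj : T a j := by
      rcases hjv with hv | hv
      · rw [show j = i from Fin.ext hv]; exact hTai
      · rw [show j = i' from Fin.ext hv]; exact hTai'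
    exact hab ((hb a).mp ⟨j, hTaj, hj⟩)
  have hRinj : EdgeInjRel R := by
    intro k l hadj hne
    obtain ⟨i, hi⟩ := hRS k
    obtain ⟨j, hj⟩ := hRS l
    have hadj' : AdjF l k := ⟨hadj.2, hadj.1⟩
    refine ⟨i, j, ?_, ?_, ?_⟩
    · intro hij
      subst hij
      obtain ⟨a, b, hab, ha, hb⟩ := hC k l hadj hne
      obtain ⟨a1, ha1⟩ := hTS i
      have e1 : a1 = a := (ha a1).mp ⟨i, ha1, hi⟩
      have e2 : a1 = b := (hb a1).mp ⟨i, ha1, hj⟩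
      exact hab (e1 ▸ e2)
    · exact fun i' => ⟨fun h' => fibsub k l hadj hne i' i h' hi, fun h' => h' ▸ hi⟩
    · exact fun j' => ⟨fun h' => fibsub l k hadj' (Ne.symm hne) j' j h' hj, fun h' => h' ▸ hj⟩
  have hTinj : EdgeInjRel T := by
    intro i i' hadj hne
    -- first: two distinct vertices in Fin (n+1) force m ≥ 1
    obtain ⟨ki, hki⟩ := hRI i
    obtain ⟨ki', hki'⟩ := hRI i'
    have hm : 1 ≤ m := by
      by_contra hm0
      have : ki = ki' := by
        apply Fin.ext
        have := ki.isLt; have := ki'.isLt; omega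
      exact hne ((hki' i).mp (this ▸ (hki i).mpr rfl))
    -- every fiber of R is a subsingleton
    have fs : ∀ k : Fin (m+1), ∀ x y : Fin (n+1), R x k → R y k → x = y := by
      intro k x y hx hy
      by_cases hk : (k : ℕ) < m
      · have hl : (k : ℕ) + 1 < m + 1 := by omega
        exact fibsub k ⟨(k : ℕ) + 1, hl⟩
          ⟨by simp only [Fin.val_mk]; omega, by simp only [Fin.val_mk]; omega⟩
          (by intro hkl; have := congrArg Fin.val hkl; simp only [Fin.val_mk] at this; omega)
          x y hx hy
      · have hl : (k : ℕ) - 1 < m + 1 := by omega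
        refine fibsub k ⟨(k : ℕ) - 1, hl⟩
          ⟨by simp only [Fin.val_mk]; omega, by simp only [Fin.val_mk]; omega⟩
          ?_ x y hx hy
        intro hkl; have := congrArg Fin.val hkl; simp only [Fin.val_mk] at this; omega
    -- the function underlying R
    let F : Fin (m+1) → Fin (n+1) := fun k => Classical.choose (hRS k)
    have hF : ∀ k, R (F k) k := fun k => Classical.choose_spec (hRS k)
    have hFmem : ∀ (k : Fin (m+1)) (x : Fin (n+1)), R x k → F k = x :=
      fun k x hx => fs k (F k) x (hF k) hx
    -- natural-number version
    have hmin : ∀ t : ℕ, min t m < m + 1 := fun t => by omega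
    let g : ℕ → ℕ := fun t => (F ⟨min t m, hmin t⟩ : ℕ)
    have hstep : ∀ s : ℕ, AdjF (F ⟨min s m, hmin s⟩) (F ⟨min (s+1) m, hmin (s+1)⟩) := by
      intro s
      exact hRE _ _ ⟨min s m, hmin s⟩ ⟨min (s+1) m, hmin (s+1)⟩ (hF _)
        ⟨by simp only [Fin.val_mk]; omega, by simp only [Fin.val_mk]; omega⟩ (hF _)
    have h1 : ∀ s, g (s+1) ≤ g s + 1 := fun s => (hstep s).2
    have h2 : ∀ s, g s ≤ g (s+1) + 1 := fun s => (hstep s).1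
    have hgF : ∀ k : Fin (m+1), g (k : ℕ) = (F k : ℕ) := by
      intro k
      have : (⟨min (k : ℕ) m, hmin _⟩ : Fin (m+1)) = k := by
        apply Fin.ext; simp only [Fin.val_mk]; have := k.isLt; omega
      simp only [g, this]
    -- locate i and i' on consecutive vertices
    have hvne : (i : ℕ) ≠ (i' : ℕ) := fun hv => hne (Fin.ext hv)
    -- fibers of the composite equal fibers of T over F
    have key : ∀ (K L : Fin (m+1)), AdjF K L → K ≠ L →
        ∃ a b, a ≠ b ∧ (∀ a', T a' (F K) ↔ a' = a) ∧ (∀ b', T b' (F L) ↔ b' = b) := by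
      intro K L hKL hKLne
      obtain ⟨a, b, hab, ha, hb⟩ := hC K L hKL hKLne
      refine ⟨a, b, hab, ?_, ?_⟩
      · intro a'
        constructor
        · intro ht; exact (ha a').mp ⟨F K, ht, hF K⟩
        · intro he
          obtain ⟨j, hTj, hRj⟩ := (ha a).mpr rfl
          rw [he, hFmem K j hRj]; exact hTj
      · intro b'
        constructor
        · intro ht; exact (hb b').mp ⟨F L, ht, hF L⟩
        · intro he
          obtain ⟨j, hTj, hRj⟩ := (hb b).mpr rfl
          rw [he, hFmem L j hRj]; exact hTj
    -- get a crossing edge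
    have hFi : F ki = i := hFmem ki i ((hki i).mpr rfl)
    have hFi' : F ki' = i' := hFmem ki' i' ((hki' i').mpr rfl)
    have hadjv : (i : ℕ) ≤ (i' : ℕ) + 1 ∧ (i' : ℕ) ≤ (i : ℕ) + 1 := hadj
    -- wlog on which of i, i' is smaller: find s with {g s, g (s+1)} = {p, p+1}
    have main : ∀ (x y : Fin (n+1)) (kx ky : Fin (m+1)), F kx = x → F ky = y →
        (x : ℕ) + 1 = (y : ℕ) →
        ∃ s : ℕ, s + 1 ≤ m ∧
          ((g s = (x : ℕ) ∧ g (s+1) = (y : ℕ)) ∨ (g s = (y : ℕ) ∧ g (s+1) = (x : ℕ))) := by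
      intro x y kx ky hkx hky hxy
      have hgx : g (kx : ℕ) = (x : ℕ) := by rw [hgF, hkx]
      have hgy : g (ky : ℕ) = (y : ℕ) := by rw [hgF, hky]
      by_cases hord : (kx : ℕ) ≤ (ky : ℕ)
      · obtain ⟨d, hd⟩ := Nat.exists_eq_add_of_le hord
        obtain ⟨s, hs1, hs2, hs3, hs4⟩ := crossUp g h1 (x : ℕ) d (kx : ℕ)
          (le_of_eq hgx) (by rw [← hd, hgy]; omega)
        have hbd : (ky : ℕ) ≤ m := by omega
        exact ⟨s, by omega, Or.inl ⟨hs3, by omega⟩⟩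
      · obtain ⟨d, hd⟩ := Nat.exists_eq_add_of_le (le_of_not_ge hord)
        obtain ⟨s, hs1, hs2, hs3, hs4⟩ := crossDown g h2 (x : ℕ) d (ky : ℕ)
          (by omega) (by rw [← hd, hgx])
        have hbd : (kx : ℕ) ≤ m := by omega
        exact ⟨s, by omega, Or.inr ⟨by omega, by omega⟩⟩
    have hcase : (i : ℕ) + 1 = (i' : ℕ) ∨ (i' : ℕ) + 1 = (i : ℕ) := by omega
    have final : ∃ s : ℕ, s + 1 ≤ m ∧
        ((g s = (i : ℕ) ∧ g (s+1) = (i' : ℕ)) ∨ (g s = (i' : ℕ) ∧ g (s+1) = (i : ℕ))) := by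
      rcases hcase with hc | hc
      · exact main i i' ki ki' hFi hFi' hc
      · obtain ⟨s, hs1, hs2⟩ := main i' i ki' ki hFi' hFi hc
        exact ⟨s, hs1, hs2.symm⟩
    obtain ⟨s, hsm, hsv⟩ := final
    have hsK : s < m + 1 := by omega
    have hsL : s + 1 < m + 1 := by omega
    set K : Fin (m+1) := ⟨s, hsK⟩
    set L : Fin (m+1) := ⟨s+1, hsL⟩
    have hKL : AdjF K L := ⟨by simp only [K, L, Fin.val_mk]; omega, by simp only [K, L, Fin.val_mk]; omega⟩
    have hKLne : K ≠ L := by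
      intro hkl; have := congrArg Fin.val hkl
      simp only [K, L, Fin.val_mk] at this; omega
    obtain ⟨a, b, hab, ha, hb⟩ := key K L hKL hKLne
    have hgK : g s = (F K : ℕ) := hgF K
    have hgL : g (s+1) = (F L : ℕ) := hgF L
    rcases hsv with ⟨hv1, hv2⟩ | ⟨hv1, hv2⟩
    · have e1 : F K = i := Fin.ext (by omega)
      have e2 : F L = i' := Fin.ext (by omega)
      exact ⟨a, b, hab, e1 ▸ ha, e2 ▸ hb⟩
    · have e1 : F K = i' := Fin.ext (by omega)
      have e2 : F L = i := Fin.ext (by omega)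
      exact ⟨b, a, Ne.symm hab, e2 ▸ hb, e1 ▸ ha⟩
  rcases h with h | h
  · exact h hRinj
  · exact h hTinj
end

section
/- For edge-injective morphisms f : Q → R and g : R → S between finite paths, the turning number satisfies t(g ∘ f) ≥ t(g) + t(f), where t(h) counts the subpaths D of the domain of length two such that h restricted to D is a turn (an edge-injective map from a length-two path onto an edge). -/
open PathCat

/-- Natural-number version of `f`. -/
noncomputable def fn {m n : ℕ} (f : Fin (m + 1) → Fin (n + 1)) : ℕ → ℕ :=
  fun i => if h : i ≤ m then (f ⟨i, Nat.lt_succ_of_le h⟩ : ℕ) else 0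

lemma fn_eq {m n : ℕ} (f : Fin (m + 1) → Fin (n + 1)) {i : ℕ} (h : i ≤ m) :
    fn f i = (f ⟨i, Nat.lt_succ_of_le h⟩ : ℕ) := by simp [fn, h]

lemma step {m n : ℕ} {f : Fin (m + 1) → Fin (n + 1)} (hf : IsEdgeInjFun f)
    {i : ℕ} (hi : i < m) :
    fn f (i + 1) = fn f i + 1 ∨ fn f i = fn f (i + 1) + 1 := by
  have h1 : i ≤ m := le_of_lt hi
  have h2 : i + 1 ≤ m := hi
  rw [fn_eq f h1, fn_eq f h2]
  set A : Fin (m+1) := ⟨i, Nat.lt_succ_of_le h1⟩ with hA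
  set B : Fin (m+1) := ⟨i+1, Nat.lt_succ_of_le h2⟩ with hB
  have hadj : AdjF A B := by
    constructor <;> simp only [hA, hB] <;> omega
  have hne : f A ≠ f B := hf.2.2 A B rfl
  obtain ⟨u, v⟩ := hf.2.1 A B hadj
  have : (f A : ℕ) ≠ (f B : ℕ) := fun h => hne (Fin.ext h)
  omega

/-- Crossing lemma: if `1 ≤ c` and `c + 1 ≤ n`, the walk `f` crosses `c` straight
somewhere. -/
lemma crossing {m n : ℕ} {f : Fin (m + 1) → Fin (n + 1)} (hf : IsEdgeInjFun f)
    {c : ℕ} (hc1 : 1 ≤ c) (hcn : c + 1 ≤ n) :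
    ∃ b : ℕ, 1 ≤ b ∧ b + 1 ≤ m ∧ fn f b = c ∧
      ((fn f (b - 1) = c - 1 ∧ fn f (b + 1) = c + 1) ∨
       (fn f (b - 1) = c + 1 ∧ fn f (b + 1) = c - 1)) := by
  classical
  obtain ⟨s0, hs0⟩ := hf.1 ⟨c - 1, by omega⟩
  obtain ⟨t0, ht0⟩ := hf.1 ⟨c + 1, by omega⟩
  have hs0v : fn f (s0 : ℕ) = c - 1 := by
    rw [fn_eq f (Nat.lt_succ_iff.mp s0.isLt)]
    simp only [Fin.eta, hs0]
  have ht0v : fn f (t0 : ℕ) = c + 1 := by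
    rw [fn_eq f (Nat.lt_succ_iff.mp t0.isLt)]
    simp only [Fin.eta, ht0]
  set P : ℕ → Prop := fun d => ∃ s, s + d ≤ m ∧
      ((fn f s < c ∧ c < fn f (s + d)) ∨ (fn f (s + d) < c ∧ c < fn f s)) with hP
  have hex : ∃ d, P d := by
    rcases lt_trichotomy (s0 : ℕ) (t0 : ℕ) with h | h | h
    · exact ⟨t0 - s0, s0, by omega, Or.inl
        (by rw [show (s0:ℕ) + ((t0:ℕ) - s0) = t0 by omega, hs0v, ht0v]; omega)⟩
    · exfalso; have : fn f (s0:ℕ) = fn f (t0:ℕ) := by rw [h]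
      omega
    · exact ⟨s0 - t0, t0, by omega, Or.inr
        (by rw [show (t0:ℕ) + ((s0:ℕ) - t0) = s0 by omega, hs0v, ht0v]; omega)⟩
  have hmin : ∀ d' < Nat.find hex, ¬ P d' := fun d' h => Nat.find_min hex h
  obtain ⟨s, hsm, hcase⟩ := Nat.find_spec hex
  generalize hD : Nat.find hex = d at hsm hcase hmin
  rw [hP] at hmin
  have hd0 : d ≠ 0 := by rintro rfl; simp only [Nat.add_zero] at hcase; omega
  have hd1 : d ≠ 1 := by
    rintro rfl
    have := step hf (show s < m by omega)
    omega
  have hd2 : d = 2 := by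
    by_contra hne
    have hd3 : 3 ≤ d := by omega
    have hst1 := step hf (show s < m by omega)
    have hst2 := step hf (show s + 1 < m by omega)
    rw [show s + 1 + 1 = s + 2 from rfl] at hst2
    rcases hcase with ⟨h1, h2⟩ | ⟨h1, h2⟩
    · rcases hst1 with h | h
      · rcases Nat.lt_or_ge (fn f (s+1)) c with hlt | hge
        · exact hmin (d-1) (by omega) ⟨s+1, by omega,
            Or.inl ⟨hlt, by rw [show s + 1 + (d-1) = s + d by omega]; exact h2⟩⟩
        · have hfc : fn f (s+1) = c := by omega
          rcases hst2 with h' | h'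
          · exact hmin 2 (by omega) ⟨s, by omega, Or.inl ⟨h1, by omega⟩⟩
          · exact hmin (d-2) (by omega) ⟨s+2, by omega,
              Or.inl ⟨by omega, by rw [show s + 2 + (d-2) = s + d by omega]; exact h2⟩⟩
      · exact hmin (d-1) (by omega) ⟨s+1, by omega,
          Or.inl ⟨by omega, by rw [show s + 1 + (d-1) = s + d by omega]; exact h2⟩⟩
    · rcases hst1 with h | h
      · exact hmin (d-1) (by omega) ⟨s+1, by omega,
          Or.inr ⟨by rw [show s + 1 + (d-1) = s + d by omega]; exact h1, by omega⟩⟩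
      · rcases Nat.lt_or_ge c (fn f (s+1)) with hlt | hge
        · exact hmin (d-1) (by omega) ⟨s+1, by omega,
            Or.inr ⟨by rw [show s + 1 + (d-1) = s + d by omega]; exact h1, hlt⟩⟩
        · have hfc : fn f (s+1) = c := by omega
          rcases hst2 with h' | h'
          · exact hmin (d-2) (by omega) ⟨s+2, by omega,
              Or.inr ⟨by rw [show s + 2 + (d-2) = s + d by omega]; exact h1, by omega⟩⟩
          · exact hmin 2 (by omega) ⟨s, by omega, Or.inr ⟨by omega, h2⟩⟩
  subst hd2
  have hst1 := step hf (show s < m by omega)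
  have hst2 := step hf (show s + 1 < m by omega)
  rw [show s + 1 + 1 = s + 2 from rfl] at hst2
  refine ⟨s + 1, by omega, by omega, ?_, ?_⟩
  · rcases hcase with ⟨h1, h2⟩ | ⟨h1, h2⟩ <;> omega
  · simp only [show s + 1 - 1 = s from rfl, show s + 1 + 1 = s + 2 from rfl]
    rcases hcase with ⟨h1, h2⟩ | ⟨h1, h2⟩ <;> omega


open PathCat in
/-- Turning numbers are superadditive under composition of edge-injective morphisms. -/
theorem stmt16 {m n p : ℕ} (f : Fin (m + 1) → Fin (n + 1)) (g : Fin (n + 1) → Fin (p + 1))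
    (hf : IsEdgeInjFun f) (hg : IsEdgeInjFun g) :
    turningNumber g + turningNumber f ≤ turningNumber (g ∘ f) := by
  classical
  set Tf : Set (Fin (m+1)) :=
    {b | ∃ a c : Fin (m+1), (a:ℕ)+1=(b:ℕ) ∧ (b:ℕ)+1=(c:ℕ) ∧ f a = f c} with hTf
  set Tg : Set (Fin (n+1)) :=
    {b | ∃ a c : Fin (n+1), (a:ℕ)+1=(b:ℕ) ∧ (b:ℕ)+1=(c:ℕ) ∧ g a = g c} with hTg
  set Tgf : Set (Fin (m+1)) :=
    {b | ∃ a c : Fin (m+1), (a:ℕ)+1=(b:ℕ) ∧ (b:ℕ)+1=(c:ℕ) ∧ (g ∘ f) a = (g ∘ f) c} with hTgf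
  have e1 : turningNumber f = Tf.ncard := rfl
  have e2 : turningNumber g = Tg.ncard := rfl
  have e3 : turningNumber (g ∘ f) = Tgf.ncard := rfl
  rw [e1, e2, e3]
  have hsub : Tf ⊆ Tgf := by
    rintro b ⟨a, c, h1, h2, h3⟩
    exact ⟨a, c, h1, h2, by simp only [Function.comp_apply, h3]⟩
  have key : ∀ c : Fin (n+1), ∃ b : Fin (m+1), c ∈ Tg → f b = c ∧ b ∈ Tgf ∧ b ∉ Tf := by
    intro c
    by_cases hc : c ∈ Tg
    swap
    · exact ⟨0, fun h => absurd h hc⟩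
    obtain ⟨a, c', ha, hcc, hgac⟩ := hc
    have hc1 : 1 ≤ (c : ℕ) := by omega
    have hcn : (c : ℕ) + 1 ≤ n := by have := c'.isLt; omega
    obtain ⟨bn, hb1, hbm, hfb, hcross⟩ := crossing hf hc1 hcn
    have hAm : bn - 1 ≤ m := by omega
    have hBm : bn ≤ m := by omega
    have hCm : bn + 1 ≤ m := by omega
    set A : Fin (m+1) := ⟨bn-1, Nat.lt_succ_of_le hAm⟩ with hA
    set B : Fin (m+1) := ⟨bn, Nat.lt_succ_of_le hBm⟩ with hB
    set C : Fin (m+1) := ⟨bn+1, Nat.lt_succ_of_le hCm⟩ with hC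
    have eA : fn f (bn-1) = (f A : ℕ) := fn_eq f hAm
    have eB : fn f bn = (f B : ℕ) := fn_eq f hBm
    have eC : fn f (bn+1) = (f C : ℕ) := fn_eq f hCm
    have hAv : (A : ℕ) = bn - 1 := rfl
    have hBv : (B : ℕ) = bn := rfl
    have hCv : (C : ℕ) = bn + 1 := rfl
    have hfB : f B = c := Fin.ext (by omega)
    have hvals : ((f A:ℕ) = (c:ℕ)-1 ∧ (f C:ℕ) = (c:ℕ)+1) ∨
        ((f A:ℕ) = (c:ℕ)+1 ∧ (f C:ℕ) = (c:ℕ)-1) := by omega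
    have hgAC : g (f A) = g (f C) := by
      rcases hvals with ⟨h1, h2⟩ | ⟨h1, h2⟩
      · have ea : f A = a := Fin.ext (by omega)
        have ec : f C = c' := Fin.ext (by omega)
        rw [ea, ec]; exact hgac
      · have ea : f A = c' := Fin.ext (by omega)
        have ec : f C = a := Fin.ext (by omega)
        rw [ea, ec]; exact hgac.symm
    refine ⟨B, fun _ => ⟨hfB, ⟨A, C, by omega, by omega, hgAC⟩, ?_⟩⟩
    rintro ⟨a2, c2, h1, h2, h3⟩
    have ea2 : a2 = A := Fin.ext (by omega)
    have ec2 : c2 = C := Fin.ext (by omega)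
    rw [ea2, ec2] at h3
    have : (f A : ℕ) = (f C : ℕ) := congrArg Fin.val h3
    omega
  choose ψ hψ using key
  have himg : ψ '' Tg ⊆ Tgf := by rintro _ ⟨c, hc, rfl⟩; exact (hψ c hc).2.1
  have hdisj : Disjoint Tf (ψ '' Tg) := by
    rw [Set.disjoint_right]; rintro _ ⟨c, hc, rfl⟩; exact (hψ c hc).2.2
  have hinj : Set.InjOn ψ Tg := by
    intro c1 h1 c2 h2 he
    rw [← (hψ c1 h1).1, ← (hψ c2 h2).1, he]
  calc Tg.ncard + Tf.ncard = (ψ '' Tg).ncard + Tf.ncard := by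
        rw [Set.ncard_image_of_injOn hinj]
    _ = (Tf ∪ ψ '' Tg).ncard := by
        rw [Set.ncard_union_eq hdisj (Set.toFinite _) (Set.toFinite _), Nat.add_comm]
    _ ≤ Tgf.ncard := Set.ncard_le_ncard (Set.union_subset hsub himg) (Set.toFinite _)
end

section
/- Every prime morphism in the category F of edge-preserving surjective functions between finite paths is either simple (the domain has exactly one more edge than the codomain), a hook (edge-injective with exactly one turn), or a proper snake (proper edge-injective with exactly two turns). -/
namespace Stmt18Aux
open PathCat

/-- ℕ-valued version of `f`. -/
def natF {m n : ℕ} (f : Fin (m + 1) → Fin (n + 1)) : ℕ → ℕ :=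
  fun x => if h : x < m + 1 then (f ⟨x, h⟩ : ℕ) else 0

variable {m n : ℕ} {f : Fin (m + 1) → Fin (n + 1)}

lemma natF_eq {x : ℕ} (h : x < m + 1) : natF f x = (f ⟨x, h⟩ : ℕ) := dif_pos h

lemma natF_coe (a : Fin (m + 1)) : natF f (a : ℕ) = (f a : ℕ) := by
  rw [natF_eq a.isLt]

lemma natF_le {x : ℕ} : natF f x ≤ n := by
  unfold natF; split
  · exact Nat.lt_succ_iff.mp (Fin.isLt _)
  · exact Nat.zero_le n

lemma natF_lip (hf : IsMorF f) {x : ℕ} (hx : x < m) :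
    natF f (x + 1) ≤ natF f x + 1 ∧ natF f x ≤ natF f (x + 1) + 1 := by
  have h := hf.2 ⟨x, by omega⟩ ⟨x + 1, by omega⟩ ⟨by simp; omega, by simp⟩
  rw [natF_eq (by omega : x < m + 1), natF_eq (by omega : x + 1 < m + 1)]
  exact ⟨h.2, h.1⟩

lemma natF_surj (hf : IsMorF f) {j : ℕ} (hj : j ≤ n) : ∃ x, x ≤ m ∧ natF f x = j := by
  obtain ⟨x, hx⟩ := hf.1 ⟨j, by omega⟩
  exact ⟨x, Nat.lt_succ_iff.mp x.isLt, by rw [natF_coe, hx]⟩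

lemma ivt_up {F : ℕ → ℕ} {lo hi v : ℕ} (hlh : lo ≤ hi) (h1 : F lo ≤ v) (h2 : v ≤ F hi)
    (hlip : ∀ x, lo ≤ x → x < hi → F (x + 1) ≤ F x + 1) :
    ∃ x, lo ≤ x ∧ x ≤ hi ∧ F x = v := by
  induction hi, hlh using Nat.le_induction with
  | base => exact ⟨lo, le_rfl, le_rfl, le_antisymm h1 h2⟩
  | succ hi hlh ih =>
    by_cases hc : v ≤ F hi
    · obtain ⟨x, h⟩ := ih hc (fun x ha hb => hlip x ha (by omega))
      exact ⟨x, h.1, by omega, h.2.2⟩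
    · have := hlip hi hlh (by omega)
      exact ⟨hi + 1, by omega, le_rfl, by omega⟩

lemma ivt_down {F : ℕ → ℕ} {lo hi v : ℕ} (hlh : lo ≤ hi) (h1 : v ≤ F lo) (h2 : F hi ≤ v)
    (hlip : ∀ x, lo ≤ x → x < hi → F x ≤ F (x + 1) + 1) :
    ∃ x, lo ≤ x ∧ x ≤ hi ∧ F x = v := by
  induction hi, hlh using Nat.le_induction with
  | base => exact ⟨lo, le_rfl, le_rfl, le_antisymm h2 h1⟩
  | succ hi hlh ih =>
    by_cases hc : F hi ≤ v
    · obtain ⟨x, h⟩ := ih hc (fun x ha hb => hlip x ha (by omega))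
      exact ⟨x, h.1, by omega, h.2.2⟩
    · have := hlip hi hlh (by omega)
      exact ⟨hi + 1, by omega, le_rfl, by omega⟩

lemma exists_max_on (F : ℕ → ℕ) {lo hi : ℕ} (hlh : lo ≤ hi) :
    ∃ x, lo ≤ x ∧ x ≤ hi ∧ ∀ y, lo ≤ y → y ≤ hi → F y ≤ F x := by
  induction hi, hlh using Nat.le_induction with
  | base =>
    refine ⟨lo, le_rfl, le_rfl, fun y h1 h2 => ?_⟩
    have : y = lo := le_antisymm h2 h1
    simp [this]
  | succ hi hlh ih =>
    obtain ⟨x, hx1, hx2, hx3⟩ := ih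
    by_cases hc : F (hi + 1) ≤ F x
    · refine ⟨x, hx1, by omega, fun y h1 h2 => ?_⟩
      rcases Nat.lt_or_ge y (hi + 1) with h | h
      · exact hx3 y h1 (by omega)
      · have : y = hi + 1 := by omega
        simpa [this] using hc
    · refine ⟨hi + 1, by omega, le_rfl, fun y h1 h2 => ?_⟩
      rcases Nat.lt_or_ge y (hi + 1) with h | h
      · exact le_trans (hx3 y h1 (by omega)) (by omega)
      · have : y = hi + 1 := by omega
        simp [this]

lemma exists_min_on (F : ℕ → ℕ) {lo hi : ℕ} (hlh : lo ≤ hi) :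
    ∃ x, lo ≤ x ∧ x ≤ hi ∧ ∀ y, lo ≤ y → y ≤ hi → F x ≤ F y := by
  induction hi, hlh using Nat.le_induction with
  | base =>
    refine ⟨lo, le_rfl, le_rfl, fun y h1 h2 => ?_⟩
    have : y = lo := le_antisymm h2 h1
    simp [this]
  | succ hi hlh ih =>
    obtain ⟨x, hx1, hx2, hx3⟩ := ih
    by_cases hc : F x ≤ F (hi + 1)
    · refine ⟨x, hx1, by omega, fun y h1 h2 => ?_⟩
      rcases Nat.lt_or_ge y (hi + 1) with h | h
      · exact hx3 y h1 (by omega)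
      · have : y = hi + 1 := by omega
        simpa [this] using hc
    · refine ⟨hi + 1, by omega, le_rfl, fun y h1 h2 => ?_⟩
      rcases Nat.lt_or_ge y (hi + 1) with h | h
      · exact le_trans (by omega) (hx3 y h1 (by omega))
      · have : y = hi + 1 := by omega
        simp [this]

lemma iso_card {k l : ℕ} {u : Fin (k + 1) → Fin (l + 1)} (h : IsIsoF u) : k = l := by
  obtain ⟨-, g, -, h1, h2⟩ := h
  have h3 := Fintype.card_congr (Equiv.mk u g h1 h2)
  simp only [Fintype.card_fin] at h3
  omega

lemma iso_inj {k l : ℕ} {u : Fin (k + 1) → Fin (l + 1)} (h : IsIsoF u) :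
    Function.Injective u := by
  obtain ⟨-, g, -, h1, -⟩ := h
  exact Function.LeftInverse.injective h1

def turnSet {m n : ℕ} (f : Fin (m + 1) → Fin (n + 1)) : Set (Fin (m + 1)) :=
  {b : Fin (m + 1) | ∃ a c : Fin (m + 1),
    (a : ℕ) + 1 = (b : ℕ) ∧ (b : ℕ) + 1 = (c : ℕ) ∧ f a = f c}

lemma turningNumber_eq : turningNumber f = (turnSet f).ncard := rfl

lemma mem_turnSet {p : Fin (m + 1)} :
    p ∈ turnSet f ↔ 1 ≤ (p : ℕ) ∧ (p : ℕ) + 1 ≤ m ∧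
      natF f ((p : ℕ) - 1) = natF f ((p : ℕ) + 1) := by
  constructor
  · rintro ⟨a, c, h1, h2, h3⟩
    have hc := c.isLt
    refine ⟨by omega, by omega, ?_⟩
    rw [natF_eq (by omega : (p : ℕ) - 1 < m + 1), natF_eq (by omega : (p : ℕ) + 1 < m + 1)]
    have ha : (⟨(p : ℕ) - 1, by omega⟩ : Fin (m + 1)) = a := Fin.ext (by simp; omega)
    have hc2 : (⟨(p : ℕ) + 1, by omega⟩ : Fin (m + 1)) = c := Fin.ext (by simp; omega)
    rw [ha, hc2, h3]
  · rintro ⟨h1, h2, h3⟩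
    refine ⟨⟨(p : ℕ) - 1, by omega⟩, ⟨(p : ℕ) + 1, by omega⟩, by simp; omega, by simp, ?_⟩
    apply Fin.ext
    rw [← natF_eq, ← natF_eq]
    exact h3

lemma package {k : ℕ} (hp : IsPrimeF f) (G H : ℕ → ℕ)
    (hHle : ∀ x, x ≤ m → H x ≤ k)
    (hGle : ∀ y, y ≤ k → G y ≤ n)
    (hcomp : ∀ x, x ≤ m → G (H x) = natF f x)
    (hHlip : ∀ x, x < m → H (x + 1) ≤ H x + 1 ∧ H x ≤ H (x + 1) + 1)
    (hGlip : ∀ y, y < k → G (y + 1) ≤ G y + 1 ∧ G y ≤ G (y + 1) + 1)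
    (hHsurj : ∀ j, j ≤ k → ∃ x, x ≤ m ∧ H x = j)
    (hGsurj : ∀ j, j ≤ n → ∃ y, y ≤ k ∧ G y = j)
    (hHninj : ∃ x y, x ≤ m ∧ y ≤ m ∧ x ≠ y ∧ H x = H y) :
    k = n := by
  set gh : Fin (k + 1) → Fin (n + 1) :=
    fun y => ⟨G y, by have := hGle y (Nat.lt_succ_iff.mp y.isLt); omega⟩ with hgh
  set hh : Fin (m + 1) → Fin (k + 1) :=
    fun x => ⟨H x, by have := hHle x (Nat.lt_succ_iff.mp x.isLt); omega⟩ with hhh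
  have lipadj : ∀ (kk : ℕ) (u : ℕ → ℕ),
      (∀ x, x < kk → u (x + 1) ≤ u x + 1 ∧ u x ≤ u (x + 1) + 1) →
      ∀ a b : ℕ, a ≤ kk → b ≤ kk → a ≤ b + 1 → b ≤ a + 1 →
      u a ≤ u b + 1 ∧ u b ≤ u a + 1 := by
    intro kk u hlip a b ha hb h1 h2
    rcases (by omega : a = b ∨ a + 1 = b ∨ b + 1 = a) with h | h | h
    · subst h; omega
    · have := hlip a (by omega); subst h; omega
    · have := hlip b (by omega); subst h; omega
  have morg : IsMorF gh := by
    constructor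
    · intro j
      obtain ⟨y, hy1, hy2⟩ := hGsurj (j : ℕ) (Nat.lt_succ_iff.mp j.isLt)
      exact ⟨⟨y, by omega⟩, Fin.ext hy2⟩
    · intro a b hab
      have hab' : (a : ℕ) ≤ (b : ℕ) + 1 ∧ (b : ℕ) ≤ (a : ℕ) + 1 := hab
      have := lipadj k G hGlip (a : ℕ) (b : ℕ) (Nat.lt_succ_iff.mp a.isLt)
        (Nat.lt_succ_iff.mp b.isLt) hab'.1 hab'.2
      exact this
  have morh : IsMorF hh := by
    constructor
    · intro j
      obtain ⟨x, hx1, hx2⟩ := hHsurj (j : ℕ) (Nat.lt_succ_iff.mp j.isLt)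
      exact ⟨⟨x, by omega⟩, Fin.ext hx2⟩
    · intro a b hab
      have hab' : (a : ℕ) ≤ (b : ℕ) + 1 ∧ (b : ℕ) ≤ (a : ℕ) + 1 := hab
      have := lipadj m H hHlip (a : ℕ) (b : ℕ) (Nat.lt_succ_iff.mp a.isLt)
        (Nat.lt_succ_iff.mp b.isLt) hab'.1 hab'.2
      exact this
  have hfac : ∀ a, f a = gh (hh a) := by
    intro a
    apply Fin.ext
    show (f a : ℕ) = G (H (a : ℕ))
    rw [hcomp (a : ℕ) (Nat.lt_succ_iff.mp a.isLt), natF_coe]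
  rcases hp.2.2 k gh hh morg morh hfac with hg | hh'
  · exact iso_card hg
  · exfalso
    obtain ⟨x, y, hx, hy, hxy, hH⟩ := hHninj
    have h2 := iso_inj hh' (a₁ := ⟨x, by omega⟩) (a₂ := ⟨y, by omega⟩) (Fin.ext hH)
    exact hxy (by simpa using congrArg Fin.val h2)

lemma collapse_case (hp : IsPrimeF f) (hm : 1 ≤ m)
    (hex : ∃ a, a < m ∧ natF f a = natF f (a + 1)) : m = n + 1 := by
  obtain ⟨a, ham, hfa⟩ := hex
  have hmor := hp.1
  have hlip : ∀ x, x < m → natF f (x + 1) ≤ natF f x + 1 ∧ natF f x ≤ natF f (x + 1) + 1 :=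
    fun x hx => natF_lip hmor hx
  obtain ⟨m', rfl⟩ : ∃ m', m = m' + 1 := ⟨m - 1, by omega⟩
  have key : m' = n := by
    apply package (k := m') hp (fun y => natF f (if y ≤ a then y else y + 1))
        (fun x => if x ≤ a then x else x - 1)
    · intro x hx; split_ifs <;> omega
    · intro y hy; exact natF_le
    · intro x hx
      by_cases h1 : x ≤ a
      · rw [if_pos h1, if_pos h1]
      · rw [if_neg h1]
        by_cases h2 : x = a + 1
        · rw [if_pos (by omega : x - 1 ≤ a), show x - 1 = a by omega]
          rw [← h2] at hfa
          exact hfa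
        · rw [if_neg (by omega : ¬ x - 1 ≤ a), show x - 1 + 1 = x by omega]
    · intro x hx; split_ifs <;> omega
    · intro y hy
      by_cases h1 : y + 1 ≤ a
      · rw [if_pos h1, if_pos (by omega : y ≤ a)]
        exact hlip y (by omega)
      · by_cases h2 : y ≤ a
        · rw [if_neg h1, if_pos h2, show y = a by omega]
          have := hlip (a + 1) (by omega)
          rw [hfa]
          exact this
        · rw [if_neg h1, if_neg h2]
          exact hlip (y + 1) (by omega)
    · intro j hj
      by_cases h1 : j ≤ a
      · exact ⟨j, by omega, by rw [if_pos h1]⟩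
      · exact ⟨j + 1, by omega, by rw [if_neg (by omega : ¬ j + 1 ≤ a)]; omega⟩
    · intro j hj
      obtain ⟨x, hx1, hx2⟩ := natF_surj hmor hj
      by_cases h1 : x ≤ a
      · exact ⟨x, by omega, by rw [if_pos h1]; exact hx2⟩
      · by_cases h2 : x = a + 1
        · refine ⟨a, by omega, ?_⟩
          rw [if_pos (le_refl a), hfa, ← h2]
          exact hx2
        · refine ⟨x - 1, by omega, ?_⟩
          rw [if_neg (by omega : ¬ x - 1 ≤ a), show x - 1 + 1 = x by omega]
          exact hx2
    · exact ⟨a, a + 1, by omega, by omega, by omega, by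
        rw [if_pos (le_refl a), if_neg (by omega : ¬ a + 1 ≤ a)]; omega⟩
  omega

def rev (n : ℕ) : Fin (n + 1) → Fin (n + 1) := fun y => ⟨n - (y : ℕ), by omega⟩

lemma rev_rev (y : Fin (n + 1)) : rev n (rev n y) = y := by
  apply Fin.ext
  show n - (n - (y : ℕ)) = (y : ℕ)
  have := y.isLt; omega

lemma rev_mor : IsMorF (rev n) := by
  constructor
  · intro y; exact ⟨rev n y, rev_rev y⟩
  · intro a b hab
    have hab' : (a : ℕ) ≤ (b : ℕ) + 1 ∧ (b : ℕ) ≤ (a : ℕ) + 1 := hab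
    exact ⟨by show n - (a : ℕ) ≤ n - (b : ℕ) + 1; omega,
           by show n - (b : ℕ) ≤ n - (a : ℕ) + 1; omega⟩

lemma mor_comp {k l m' : ℕ} {u : Fin (k + 1) → Fin (l + 1)} {v : Fin (m' + 1) → Fin (k + 1)}
    (hu : IsMorF u) (hv : IsMorF v) : IsMorF (fun a => u (v a)) :=
  ⟨hu.1.comp hv.1, fun a b hab => hu.2 _ _ (hv.2 a b hab)⟩

lemma iso_comp {k l m' : ℕ} {u : Fin (k + 1) → Fin (l + 1)} {v : Fin (m' + 1) → Fin (k + 1)}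
    (hu : IsIsoF u) (hv : IsIsoF v) : IsIsoF (fun a => u (v a)) := by
  obtain ⟨hu1, gu, hgu, hgu1, hgu2⟩ := hu
  obtain ⟨hv1, gv, hgv, hgv1, hgv2⟩ := hv
  refine ⟨mor_comp hu1 hv1, fun b => gv (gu b), mor_comp hgv hgu, fun a => ?_, fun b => ?_⟩
  · show gv (gu (u (v a))) = a
    rw [hgu1, hgv1]
  · show u (v (gv (gu b))) = b
    rw [hgv2, hgu2]

lemma rev_iso : IsIsoF (rev n) := ⟨rev_mor, rev n, rev_mor, rev_rev, rev_rev⟩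

lemma iso_congr {k l : ℕ} {u v : Fin (k + 1) → Fin (l + 1)} (h : ∀ a, u a = v a)
    (hu : IsIsoF u) : IsIsoF v := funext h ▸ hu

lemma prime_rev_left (hpr : IsPrimeF f) : IsPrimeF (fun a => rev n (f a)) := by
  refine ⟨mor_comp rev_mor hpr.1, ?_, ?_⟩
  · intro hiso
    apply hpr.2.1
    refine iso_congr (fun a => ?_) (iso_comp rev_iso hiso)
    show rev n (rev n (f a)) = f a
    exact rev_rev (f a)
  · intro k g h hg hh he
    have he' : ∀ a, f a = (fun y => rev n (g y)) (h a) := by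
      intro a
      have h2 := congrArg (rev n) (he a)
      rwa [rev_rev] at h2
    rcases hpr.2.2 k (fun y => rev n (g y)) h (mor_comp rev_mor hg) hh he' with h1 | h1
    · left
      refine iso_congr (fun y => ?_) (iso_comp rev_iso h1)
      show rev n (rev n (g y)) = g y
      exact rev_rev (g y)
    · right; exact h1

lemma prime_rev_right (hpr : IsPrimeF f) : IsPrimeF (fun a => f (rev m a)) := by
  refine ⟨mor_comp hpr.1 rev_mor, ?_, ?_⟩
  · intro hiso
    apply hpr.2.1
    refine iso_congr (fun a => ?_) (iso_comp hiso rev_iso)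
    show f (rev m (rev m a)) = f a
    rw [rev_rev]
  · intro k g h hg hh he
    have he' : ∀ a, f a = g ((fun b => h (rev m b)) a) := by
      intro a
      have h2 := he (rev m a)
      have h3 : f (rev m (rev m a)) = g (h (rev m a)) := h2
      rwa [rev_rev] at h3
    rcases hpr.2.2 k g (fun b => h (rev m b)) hg (mor_comp hh rev_mor) he' with h1 | h1
    · left; exact h1
    · right
      refine iso_congr (fun b => ?_) (iso_comp h1 rev_iso)
      show h (rev m (rev m b)) = h b
      rw [rev_rev]

lemma natF_rev_comp {x : ℕ} (hx : x ≤ m) :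
    natF (fun a => rev n (f a)) x = n - natF f x := by
  rw [natF_eq (by omega : x < m + 1), natF_eq (by omega : x < m + 1)]
  rfl

lemma natF_comp_rev {x : ℕ} (hx : x ≤ m) :
    natF (fun a => f (rev m a)) x = natF f (m - x) := by
  rw [natF_eq (by omega : x < m + 1), natF_eq (by omega : m - x < m + 1)]
  rfl

lemma turnSet_rev_left : turnSet (fun a => rev n (f a)) = turnSet f := by
  ext p
  constructor <;> rintro ⟨a, c, h1, h2, h3⟩ <;> refine ⟨a, c, h1, h2, ?_⟩
  · have h4 := congrArg (rev n) h3
    rwa [rev_rev, rev_rev] at h4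
  · show rev n (f a) = rev n (f c)
    rw [h3]

lemma tn_rev_left : turningNumber (fun a => rev n (f a)) = turningNumber f := by
  rw [turningNumber_eq, turningNumber_eq, turnSet_rev_left]

lemma mem_turnSet_rev_right (p : Fin (m + 1)) :
    p ∈ turnSet (fun a => f (rev m a)) ↔ rev m p ∈ turnSet f := by
  rw [mem_turnSet, mem_turnSet]
  have hpm : (p : ℕ) ≤ m := Nat.lt_succ_iff.mp p.isLt
  have hrv : ((rev m p : Fin (m + 1)) : ℕ) = m - (p : ℕ) := rfl
  rw [hrv]
  constructor
  · rintro ⟨h1, h2, h3⟩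
    rw [natF_comp_rev (by omega), natF_comp_rev (by omega)] at h3
    rw [show m - ((p : ℕ) - 1) = (m - (p : ℕ)) + 1 by omega,
        show m - ((p : ℕ) + 1) = (m - (p : ℕ)) - 1 by omega] at h3
    exact ⟨by omega, by omega, h3.symm⟩
  · rintro ⟨h1, h2, h3⟩
    refine ⟨by omega, by omega, ?_⟩
    rw [natF_comp_rev (by omega), natF_comp_rev (by omega)]
    rw [show m - ((p : ℕ) - 1) = (m - (p : ℕ)) + 1 by omega,
        show m - ((p : ℕ) + 1) = (m - (p : ℕ)) - 1 by omega]
    exact h3.symm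

lemma tn_rev_right : turningNumber (fun a => f (rev m a)) = turningNumber f := by
  rw [turningNumber_eq, turningNumber_eq]
  have himg : turnSet (fun a => f (rev m a)) = rev m '' turnSet f := by
    ext p
    rw [mem_turnSet_rev_right]
    constructor
    · intro hmem
      exact ⟨rev m p, hmem, rev_rev p⟩
    · rintro ⟨q, hq, hqp⟩
      rw [← hqp, rev_rev]
      exact hq
  rw [himg, Set.ncard_image_of_injective _ (Function.LeftInverse.injective rev_rev)]

lemma noturn_case (hp : IsPrimeF f) (hm : 1 ≤ m)
    (hW : ∀ x, x < m → natF f (x + 1) ≠ natF f x)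
    (hnt : ∀ p : ℕ, 1 ≤ p → p + 1 ≤ m → natF f (p - 1) ≠ natF f (p + 1)) : False := by
  have hmor := hp.1
  apply hp.2.1
  have hlip : ∀ x, x < m → natF f (x + 1) ≤ natF f x + 1 ∧ natF f x ≤ natF f (x + 1) + 1 :=
    fun x hx => natF_lip hmor hx
  have hle : ∀ x : ℕ, natF f x ≤ n := fun x => natF_le
  have hstep : ∀ x, x < m → (natF f (x + 1) = natF f x + 1 ∨ natF f x = natF f (x + 1) + 1) := by
    intro x hx
    have := hlip x hx; have := hW x hx; omega
  have hturn : ∀ x, x + 2 ≤ m → natF f x ≠ natF f (x + 2) := by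
    intro x hx
    have := hnt (x + 1) (by omega) (by omega)
    rwa [show x + 1 - 1 = x by omega, show x + 1 + 1 = x + 2 by omega] at this
  rcases hstep 0 (by omega) with hup | hdn
  · -- increasing case
    have hmono : ∀ x, x < m → natF f (x + 1) = natF f x + 1 := by
      intro x
      induction x with
      | zero => intro _; exact hup
      | succ y ih =>
        intro hx
        have h1 := ih (by omega)
        rcases hstep (y + 1) hx with h | h
        · exact h
        · exfalso
          apply hturn y (by omega)
          rw [show y + 2 = y + 1 + 1 by omega]
          omega
    have hval : ∀ x, x ≤ m → natF f x = natF f 0 + x := by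
      intro x
      induction x with
      | zero => intro _; omega
      | succ y ih => intro hx; rw [hmono y (by omega), ih (by omega)]; omega
    have hF0 : natF f 0 = 0 := by
      obtain ⟨x0, hx01, hx02⟩ := natF_surj hmor (j := 0) (by omega)
      have := hval x0 hx01; omega
    have hmn : m = n := by
      obtain ⟨w, hw1, hw2⟩ := natF_surj hmor (j := n) le_rfl
      have h1 := hval w hw1
      have h2 := hval m le_rfl
      have := hle m
      omega
    have hco : ∀ a : Fin (m + 1), (f a : ℕ) = (a : ℕ) := by
      intro a
      have h1 := hval (a : ℕ) (Nat.lt_succ_iff.mp a.isLt)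
      rw [natF_coe] at h1
      omega
    refine ⟨hmor, fun y => ⟨min (y : ℕ) m, by omega⟩, ⟨?_, ?_⟩, ?_, ?_⟩
    · intro x
      refine ⟨f x, Fin.ext ?_⟩
      show min ((f x : ℕ)) m = (x : ℕ)
      have := hco x; have := Nat.lt_succ_iff.mp x.isLt; omega
    · intro a b hab
      have hab' : (a : ℕ) ≤ (b : ℕ) + 1 ∧ (b : ℕ) ≤ (a : ℕ) + 1 := hab
      exact ⟨by show min (a : ℕ) m ≤ min (b : ℕ) m + 1; omega,
             by show min (b : ℕ) m ≤ min (a : ℕ) m + 1; omega⟩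
    · intro a
      apply Fin.ext
      show min ((f a : ℕ)) m = (a : ℕ)
      have := hco a; have := Nat.lt_succ_iff.mp a.isLt; omega
    · intro b
      apply Fin.ext
      have h1 := hco ⟨min (b : ℕ) m, by omega⟩
      show (f ⟨min (b : ℕ) m, by omega⟩ : ℕ) = (b : ℕ)
      have h2 : ((⟨min (b : ℕ) m, by omega⟩ : Fin (m + 1)) : ℕ) = min (b : ℕ) m := rfl
      rw [h2] at h1
      have := Nat.lt_succ_iff.mp b.isLt
      omega
  · -- decreasing case
    have hmono : ∀ x, x < m → natF f x = natF f (x + 1) + 1 := by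
      intro x
      induction x with
      | zero => intro _; exact hdn
      | succ y ih =>
        intro hx
        have h1 := ih (by omega)
        rcases hstep (y + 1) hx with h | h
        · exfalso
          apply hturn y (by omega)
          rw [show y + 2 = y + 1 + 1 by omega]
          omega
        · exact h
    have hval : ∀ x, x ≤ m → natF f x + x = natF f 0 := by
      intro x
      induction x with
      | zero => intro _; omega
      | succ y ih =>
        intro hx
        have := hmono y (by omega)
        have := ih (by omega)
        omega
    have hF0 : natF f 0 = n := by
      obtain ⟨w, hw1, hw2⟩ := natF_surj hmor (j := n) le_rfl
      have := hval w hw1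
      have := hle 0
      omega
    have hmn : m = n := by
      obtain ⟨x0, hx01, hx02⟩ := natF_surj hmor (j := 0) (by omega)
      have h1 := hval x0 hx01
      have h2 := hval m le_rfl
      omega
    have hco : ∀ a : Fin (m + 1), (f a : ℕ) + (a : ℕ) = n := by
      intro a
      have h1 := hval (a : ℕ) (Nat.lt_succ_iff.mp a.isLt)
      rw [natF_coe] at h1
      omega
    refine ⟨hmor, fun y => ⟨min (n - (y : ℕ)) m, by omega⟩, ⟨?_, ?_⟩, ?_, ?_⟩
    · intro x
      refine ⟨f x, Fin.ext ?_⟩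
      show min (n - (f x : ℕ)) m = (x : ℕ)
      have := hco x; have := Nat.lt_succ_iff.mp x.isLt; omega
    · intro a b hab
      have hab' : (a : ℕ) ≤ (b : ℕ) + 1 ∧ (b : ℕ) ≤ (a : ℕ) + 1 := hab
      exact ⟨by show min (n - (a : ℕ)) m ≤ min (n - (b : ℕ)) m + 1; omega,
             by show min (n - (b : ℕ)) m ≤ min (n - (a : ℕ)) m + 1; omega⟩
    · intro a
      apply Fin.ext
      show min (n - (f a : ℕ)) m = (a : ℕ)
      have := hco a; have := Nat.lt_succ_iff.mp a.isLt; omega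
    · intro b
      apply Fin.ext
      have h1 := hco ⟨min (n - (b : ℕ)) m, by omega⟩
      show (f ⟨min (n - (b : ℕ)) m, by omega⟩ : ℕ) = (b : ℕ)
      have h2 : ((⟨min (n - (b : ℕ)) m, by omega⟩ : Fin (m + 1)) : ℕ) = min (n - (b : ℕ)) m := rfl
      rw [h2] at h1
      have := Nat.lt_succ_iff.mp b.isLt
      omega

lemma fold_case (hp : IsPrimeF f)
    (hW : ∀ x, x < m → natF f (x + 1) ≠ natF f x)
    {xs : ℕ} (hxs0 : 0 < xs) (hxsm : xs < m) (hxsn : natF f xs = n)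
    (hturn : ∃ p : ℕ, 1 ≤ p ∧ p + 1 ≤ m ∧ natF f (p - 1) = natF f (p + 1) ∧ p ≠ xs) :
    False := by
  have hmor := hp.1
  have hlip : ∀ x, x < m → natF f (x + 1) ≤ natF f x + 1 ∧ natF f x ≤ natF f (x + 1) + 1 :=
    fun x hx => natF_lip hmor hx
  have hle : ∀ x : ℕ, natF f x ≤ n := fun x => natF_le
  obtain ⟨xc, hxc1, hxc2, hxc3⟩ := exists_min_on (natF f) (Nat.zero_le xs)
  obtain ⟨xb, hxb1, hxb2, hxb3⟩ := exists_min_on (natF f) (le_of_lt hxsm)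
  have hcn : natF f xc ≤ n - 1 := by
    have h1 := hlip (xs - 1) (by omega)
    have h2 := hW (xs - 1) (by omega)
    rw [show xs - 1 + 1 = xs by omega] at h1 h2
    have h3 := hxc3 (xs - 1) (by omega) (by omega)
    have h4 := hle (xs - 1)
    omega
  have hbn : natF f xb ≤ n - 1 := by
    have h1 := hlip xs hxsm
    have h2 := hW xs hxsm
    have h3 := hxb3 (xs + 1) (by omega) (by omega)
    have h4 := hle (xs + 1)
    omega
  have hn1 : 1 ≤ n := by
    have h2 := hW xs hxsm
    have h4 := hle (xs + 1)
    omega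
  have hbc : natF f xb = 0 ∨ natF f xc = 0 := by
    obtain ⟨x0, hx01, hx02⟩ := natF_surj hmor (j := 0) (by omega)
    rcases le_or_gt x0 xs with h | h
    · right
      have := hxc3 x0 (by omega) h
      omega
    · left
      have := hxb3 x0 (by omega) hx01
      omega
  have key : (n - natF f xc) + (n - natF f xb) = n := by
    apply package hp
      (G := fun y => if y ≤ n - natF f xc then y + natF f xc else (2 * n - natF f xc) - y)
      (H := fun x => if x ≤ xs then natF f x - natF f xc else (2 * n - natF f xc) - natF f x)
    · intro x hx
      have h1 := hle x
      split_ifs with h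
      · omega
      · have h2 := hxb3 x (by omega) hx
        omega
    · intro y hy
      split_ifs with h <;> omega
    · intro x hx
      by_cases h1 : x ≤ xs
      · rw [if_pos h1, if_pos (by have := hle x; omega : natF f x - natF f xc ≤ n - natF f xc)]
        have := hxc3 x (by omega) h1
        omega
      · rw [if_neg h1]
        have hb2 := hxb3 x (by omega) hx
        have h3 := hle x
        by_cases h2 : (2 * n - natF f xc) - natF f x ≤ n - natF f xc
        · rw [if_pos h2]; omega
        · rw [if_neg h2]; omega
    · intro x hx
      have hl := hlip x hx
      have h3 := hle x
      have h4 := hle (x + 1)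
      by_cases h1 : x + 1 ≤ xs
      · rw [if_pos (by omega : x ≤ xs), if_pos h1]
        have := hxc3 x (by omega) (by omega)
        have := hxc3 (x + 1) (by omega) h1
        omega
      · by_cases h2 : x ≤ xs
        · rw [if_pos h2, if_neg h1]
          have hx' : x = xs := by omega
          subst hx'
          have h2' := hW x hxsm
          omega
        · rw [if_neg h2, if_neg h1]
          have := hxb3 x (by omega) (by omega)
          have := hxb3 (x + 1) (by omega) (by omega)
          omega
    · intro y hy
      split_ifs <;> omega
    · intro j hj
      by_cases h1 : j ≤ n - natF f xc
      · obtain ⟨x, hx1, hx2, hx3⟩ := ivt_up (F := natF f) (v := j + natF f xc) hxc2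
          (by omega) (by omega) (fun z hz1 hz2 => (hlip z (by omega)).1)
        refine ⟨x, by omega, ?_⟩
        rw [if_pos hx2]
        omega
      · obtain ⟨x, hx1, hx2, hx3⟩ := ivt_down (F := natF f) (v := (2 * n - natF f xc) - j) hxb1
          (by omega) (by omega) (fun z hz1 hz2 => (hlip z (by omega)).2)
        refine ⟨x, by omega, ?_⟩
        have hxgt : ¬ x ≤ xs := by
          intro hxx
          have hxeq : x = xs := le_antisymm hxx hx1
          rw [hxeq, hxsn] at hx3
          omega
        rw [if_neg hxgt]
        omega
    · intro j hj
      by_cases h1 : natF f xc ≤ j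
      · exact ⟨j - natF f xc, by omega, by rw [if_pos (by omega)]; omega⟩
      · have hb0 : natF f xb = 0 := by
          rcases hbc with h | h
          · exact h
          · omega
        refine ⟨(2 * n - natF f xc) - j, by omega, ?_⟩
        rw [if_neg (by omega)]
        omega
    · obtain ⟨p, hp1, hp2, hpt, hpx⟩ := hturn
      refine ⟨p - 1, p + 1, by omega, by omega, by omega, ?_⟩
      rcases (by omega : p + 1 ≤ xs ∨ p = xs + 1 ∨ xs + 1 < p) with h | h | h
      · rw [if_pos (by omega : p - 1 ≤ xs), if_pos h, hpt]
      · rw [if_pos (by omega : p - 1 ≤ xs), if_neg (by omega : ¬ p + 1 ≤ xs)]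
        have e : p - 1 = xs := by omega
        rw [e] at hpt
        rw [e, hxsn]
        rw [hxsn] at hpt
        have := hle (p + 1)
        omega
      · rw [if_neg (by omega : ¬ p - 1 ≤ xs), if_neg (by omega : ¬ p + 1 ≤ xs), hpt]
  omega

lemma snake_case (hp : IsPrimeF f) (hm : 1 ≤ m)
    (hW : ∀ x, x < m → natF f (x + 1) ≠ natF f x)
    (h0 : natF f 0 = 0) (hmv : natF f m = n)
    (ht : 3 ≤ turningNumber f) : False := by
  classical
  have hmor := hp.1
  have hlip : ∀ x, x < m → natF f (x + 1) ≤ natF f x + 1 ∧ natF f x ≤ natF f (x + 1) + 1 :=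
    fun x hx => natF_lip hmor hx
  have hle : ∀ x : ℕ, natF f x ≤ n := fun x => natF_le
  have hstep : ∀ x, x < m → (natF f (x + 1) = natF f x + 1 ∨ natF f x = natF f (x + 1) + 1) :=
    fun x hx => by have := hlip x hx; have := hW x hx; omega
  rw [turningNumber_eq] at ht
  have hex : ∃ x, x < m ∧ natF f (x + 1) ≠ natF f x + 1 := by
    by_contra hall
    push_neg at hall
    obtain ⟨p, hpmem⟩ := Set.nonempty_of_ncard_ne_zero (s := turnSet f) (by omega)
    rw [mem_turnSet] at hpmem
    obtain ⟨h1, h2, h3⟩ := hpmem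
    have e1 := hall ((p : ℕ) - 1) (by omega)
    have e2 := hall (p : ℕ) (by omega)
    rw [show (p : ℕ) - 1 + 1 = (p : ℕ) by omega] at e1
    omega
  have hPspec : Nat.find hex < m ∧ natF f (Nat.find hex + 1) ≠ natF f (Nat.find hex) + 1 :=
    Nat.find_spec hex
  set P := Nat.find hex with hPdef
  have hPmin : ∀ x, x < P → natF f (x + 1) = natF f x + 1 := by
    intro x hx
    by_contra hne2
    exact (Nat.find_min hex hx) ⟨by omega, hne2⟩
  have hid : ∀ x, x ≤ P → natF f x = x := by
    intro x
    induction x with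
    | zero => intro _; exact h0
    | succ y ih =>
      intro hx
      rw [hPmin y (by omega), ih (by omega)]
  have hP1 : 1 ≤ P := by
    by_contra hc
    have hP0 : P = 0 := by omega
    rcases hstep 0 (by omega) with h | h
    · apply hPspec.2
      rw [hP0]
      exact h
    · omega
  have hFP : natF f P = P := hid P le_rfl
  have hFP1 : natF f (P + 1) + 1 = natF f P := by
    rcases hstep P hPspec.1 with h | h
    · exact absurd h hPspec.2
    · omega
  obtain ⟨xb, hxb1, hxb2, hxb3⟩ := exists_min_on (natF f) (le_of_lt hPspec.1)
  obtain ⟨xa, hxa1, hxa2, hxa3⟩ := exists_max_on (natF f) (Nat.zero_le xb)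
  have hb_lt_a : natF f xb < natF f xa := by
    have h1 := hxb3 (P + 1) (by omega) (by omega)
    have h2 := hxa3 P (by omega) hxb1
    omega
  have hxaP : P ≤ xa := by
    by_contra hc
    have := hid xa (by omega)
    have h2 := hxa3 P (by omega) hxb1
    omega
  have hxab : xa < xb := by
    rcases Nat.lt_or_ge xa xb with h | h
    · exact h
    · exfalso
      have he : xa = xb := by omega
      rw [he] at hb_lt_a
      omega
  have hextra : ∃ p : Fin (m + 1), p ∈ turnSet f ∧ (p : ℕ) ≠ xa ∧ (p : ℕ) ≠ xb := by
    by_contra hc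
    push_neg at hc
    have hsub : turnSet f ⊆ {(⟨xa, by omega⟩ : Fin (m + 1)), ⟨xb, by omega⟩} := by
      intro q hq
      by_cases hqa : (q : ℕ) = xa
      · left; exact Fin.ext hqa
      · right; exact Fin.ext (hc q hq hqa)
    have hle2 : (turnSet f).ncard ≤ 2 := by
      refine le_trans (Set.ncard_le_ncard hsub (Set.toFinite _)) ?_
      refine le_trans (Set.ncard_insert_le _ _) ?_
      simp
    omega
  obtain ⟨pf, hpmem, hpxa, hpxb⟩ := hextra
  rw [mem_turnSet] at hpmem
  obtain ⟨hpf1, hpf2, hpft⟩ := hpmem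
  have han : natF f xa ≤ n := hle xa
  have hbn' : natF f xb ≤ n := hle xb
  have key : 2 * (natF f xa - natF f xb) + n = n := by
    apply package hp
      (G := fun y => if y ≤ natF f xa then y
        else if y ≤ 2 * natF f xa - natF f xb then 2 * natF f xa - y
        else y - 2 * (natF f xa - natF f xb))
      (H := fun x => if x ≤ xa then natF f x
        else if x ≤ xb then 2 * natF f xa - natF f x
        else 2 * (natF f xa - natF f xb) + natF f x)
    · intro x hx
      have h1 := hle x
      by_cases hx1 : x ≤ xa
      · rw [if_pos hx1]
        have := hxa3 x (by omega) (by omega)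
        omega
      · by_cases hx2 : x ≤ xb
        · rw [if_neg hx1, if_pos hx2]
          have := hxb3 x (by omega) hx
          omega
        · rw [if_neg hx1, if_neg hx2]
          omega
    · intro y hy
      split_ifs <;> omega
    · intro x hx
      by_cases hx1 : x ≤ xa
      · rw [if_pos hx1, if_pos (hxa3 x (by omega) (by omega))]
      · by_cases hx2 : x ≤ xb
        · have h3 := hxb3 x (by omega) hx
          have h4 := hxa3 x (by omega) hx2
          rw [if_neg hx1, if_pos hx2]
          by_cases h5 : 2 * natF f xa - natF f x ≤ natF f xa
          · rw [if_pos h5]; omega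
          · rw [if_neg h5,
              if_pos (by omega : 2 * natF f xa - natF f x ≤ 2 * natF f xa - natF f xb)]
            omega
        · have h3 := hxb3 x (by omega) hx
          have h4 := hle x
          rw [if_neg hx1, if_neg hx2,
            if_neg (by omega : ¬ 2 * (natF f xa - natF f xb) + natF f x ≤ natF f xa)]
          by_cases h7 : 2 * (natF f xa - natF f xb) + natF f x ≤ 2 * natF f xa - natF f xb
          · rw [if_pos h7]; omega
          · rw [if_neg h7]; omega
    · intro x hx
      have hl := hlip x hx
      have h3 := hle x
      have h4 := hle (x + 1)
      by_cases h1 : x + 1 ≤ xa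
      · rw [if_pos (by omega : x ≤ xa), if_pos h1]
        exact hl
      · by_cases h2 : x ≤ xa
        · have he : x = xa := by omega
          subst he
          rw [if_pos (le_refl x), if_neg h1, if_pos (by omega : x + 1 ≤ xb)]
          have h5 := hxa3 (x + 1) (by omega) (by omega)
          omega
        · by_cases h6 : x + 1 ≤ xb
          · rw [if_neg h2, if_neg h1, if_pos h6, if_pos (by omega : x ≤ xb)]
            have := hxa3 x (by omega) (by omega)
            have := hxa3 (x + 1) (by omega) (by omega)
            have := hxb3 x (by omega) (by omega)
            have := hxb3 (x + 1) (by omega) (by omega)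
            omega
          · by_cases h8 : x ≤ xb
            · have he : x = xb := by omega
              subst he
              rw [if_neg h2, if_pos (le_refl x), if_neg h1, if_neg h6]
              have := hxb3 (x + 1) (by omega) (by omega)
              have := hxa3 x (by omega) (by omega)
              omega
            · rw [if_neg h2, if_neg h8, if_neg h1, if_neg h6]
              have := hxb3 x (by omega) (by omega)
              have := hxb3 (x + 1) (by omega) (by omega)
              omega
    · intro y hy
      split_ifs <;> omega
    · intro j hj
      by_cases h1 : j ≤ natF f xa
      · obtain ⟨x, hx1, hx2, hx3⟩ := ivt_up (F := natF f) (v := j) (Nat.zero_le xa)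
          (by omega) (by omega) (fun z hz1 hz2 => (hlip z (by omega)).1)
        exact ⟨x, by omega, by rw [if_pos hx2]; exact hx3⟩
      · by_cases h2 : j ≤ 2 * natF f xa - natF f xb
        · obtain ⟨x, hx1, hx2, hx3⟩ := ivt_down (F := natF f) (v := 2 * natF f xa - j)
            (le_of_lt hxab) (by omega) (by omega) (fun z hz1 hz2 => (hlip z (by omega)).2)
          have hxgt : ¬ x ≤ xa := by
            intro hxx
            have hxeq : x = xa := le_antisymm hxx hx1
            rw [hxeq] at hx3
            omega
          exact ⟨x, by omega, by rw [if_neg hxgt, if_pos hx2]; omega⟩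
        · obtain ⟨x, hx1, hx2, hx3⟩ := ivt_up (F := natF f)
            (v := j - 2 * (natF f xa - natF f xb)) hxb2 (by omega) (by omega)
            (fun z hz1 hz2 => (hlip z (by omega)).1)
          have hxgt2 : ¬ x ≤ xb := by
            intro hxx
            have hxeq : x = xb := le_antisymm hxx hx1
            rw [hxeq] at hx3
            omega
          exact ⟨x, by omega, by rw [if_neg (by omega : ¬ x ≤ xa), if_neg hxgt2]; omega⟩
    · intro j hj
      by_cases h1 : j ≤ natF f xa
      · exact ⟨j, by omega, by rw [if_pos h1]⟩
      · refine ⟨j + 2 * (natF f xa - natF f xb), by omega, ?_⟩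
        rw [if_neg (by omega), if_neg (by omega)]
        omega
    · refine ⟨(pf : ℕ) - 1, (pf : ℕ) + 1, by omega, by omega, by omega, ?_⟩
      rcases (by omega : (pf : ℕ) + 1 ≤ xa ∨ (pf : ℕ) = xa + 1 ∨
          (xa + 1 < (pf : ℕ) ∧ (pf : ℕ) + 1 ≤ xb) ∨ (pf : ℕ) = xb + 1 ∨ xb + 1 < (pf : ℕ))
        with h | h | h | h | h
      · rw [if_pos (by omega : (pf : ℕ) - 1 ≤ xa), if_pos (by omega : (pf : ℕ) + 1 ≤ xa), hpft]
      · have e : (pf : ℕ) - 1 = xa := by omega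
        rw [if_pos (by omega : (pf : ℕ) - 1 ≤ xa), if_neg (by omega : ¬ (pf : ℕ) + 1 ≤ xa),
          if_pos (by omega : (pf : ℕ) + 1 ≤ xb)]
        rw [e] at hpft
        rw [e]
        omega
      · rw [if_neg (by omega : ¬ (pf : ℕ) - 1 ≤ xa), if_pos (by omega : (pf : ℕ) - 1 ≤ xb),
          if_neg (by omega : ¬ (pf : ℕ) + 1 ≤ xa), if_pos (by omega : (pf : ℕ) + 1 ≤ xb), hpft]
      · have e : (pf : ℕ) - 1 = xb := by omega
        rw [if_neg (by omega : ¬ (pf : ℕ) - 1 ≤ xa), if_pos (by omega : (pf : ℕ) - 1 ≤ xb),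
          if_neg (by omega : ¬ (pf : ℕ) + 1 ≤ xa), if_neg (by omega : ¬ (pf : ℕ) + 1 ≤ xb)]
        rw [e] at hpft
        rw [e]
        omega
      · rw [if_neg (by omega : ¬ (pf : ℕ) - 1 ≤ xa), if_neg (by omega : ¬ (pf : ℕ) - 1 ≤ xb),
          if_neg (by omega : ¬ (pf : ℕ) + 1 ≤ xa), if_neg (by omega : ¬ (pf : ℕ) + 1 ≤ xb), hpft]
  omega

lemma proper_case (hint : ∀ x, 0 < x → x < m → natF f x ≠ 0 ∧ natF f x ≠ n) (hn : 1 ≤ n) :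
    ProperFun f := by
  intro a b hab hsurj
  obtain ⟨k0, hk01, hk02, hk03⟩ := hsurj ⟨0, by omega⟩
  obtain ⟨k1, hk11, hk12, hk13⟩ := hsurj ⟨n, by omega⟩
  have h0 : natF f (k0 : ℕ) = 0 := by rw [natF_coe, hk03]
  have h1 : natF f (k1 : ℕ) = n := by rw [natF_coe, hk13]
  have hk0 : (k0 : ℕ) = 0 ∨ (k0 : ℕ) = m := by
    by_contra hc
    push_neg at hc
    have := k0.isLt
    exact (hint (k0 : ℕ) (by omega) (by omega)).1 h0
  have hk1 : (k1 : ℕ) = 0 ∨ (k1 : ℕ) = m := by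
    by_contra hc
    push_neg at hc
    have := k1.isLt
    exact (hint (k1 : ℕ) (by omega) (by omega)).2 h1
  have hne : (k0 : ℕ) ≠ (k1 : ℕ) := by
    intro h
    rw [h, h1] at h0
    omega
  have ha0 : (a : ℕ) ≤ (k0 : ℕ) := hk01
  have hb0 : (k0 : ℕ) ≤ (b : ℕ) := hk02
  have ha1 : (a : ℕ) ≤ (k1 : ℕ) := hk11
  have hb1 : (k1 : ℕ) ≤ (b : ℕ) := hk12
  exact ⟨by omega, by omega⟩

theorem main {m n : ℕ} (f : Fin (m + 1) → Fin (n + 1)) (hp : IsPrimeF f) :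
    m = n + 1 ∨ (IsEdgeInjFun f ∧ turningNumber f = 1) ∨
      (IsEdgeInjFun f ∧ turningNumber f = 2 ∧ ProperFun f) := by
  classical
  have hmor := hp.1
  rcases Nat.eq_zero_or_pos m with hm0 | hm
  · exfalso
    apply hp.2.1
    subst hm0
    have hss : ∀ u v : Fin (0 + 1), u = v := fun u v => by
      apply Fin.ext
      have := u.isLt
      have := v.isLt
      omega
    have hn0 : n = 0 := by
      by_contra hc
      obtain ⟨x, hx⟩ := hmor.1 ⟨1, by omega⟩
      obtain ⟨y, hy⟩ := hmor.1 ⟨0, by omega⟩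
      have h3 : f x = f y := by rw [hss x y]
      rw [hx, hy] at h3
      have h4 : (1 : ℕ) = 0 := congrArg Fin.val h3
      omega
    subst hn0
    exact ⟨hmor, fun _ => 0, ⟨fun x => ⟨0, hss _ _⟩,
      fun a b _ => ⟨by simp, by simp⟩⟩, fun a => hss _ _,
      fun b => hss _ _⟩
  by_cases hEI : ∃ x, x < m ∧ natF f (x + 1) = natF f x
  · left
    obtain ⟨x, h1, h2⟩ := hEI
    exact collapse_case hp hm ⟨x, h1, h2.symm⟩
  · push_neg at hEI
    have hW : ∀ x, x < m → natF f (x + 1) ≠ natF f x := hEI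
    have hEIF : IsEdgeInjFun f := by
      refine ⟨hmor.1, hmor.2, fun a b hab hfe => ?_⟩
      have hbm := Nat.lt_succ_iff.mp b.isLt
      apply hW (a : ℕ) (by omega)
      rw [hab, natF_coe, natF_coe, hfe]
    by_cases ht1 : turningNumber f = 1
    · exact Or.inr (Or.inl ⟨hEIF, ht1⟩)
    by_cases ht0 : turningNumber f = 0
    · exfalso
      have hempty : turnSet f = ∅ := by
        rw [turningNumber_eq] at ht0
        exact (Set.ncard_eq_zero (Set.toFinite _)).mp ht0
      have hnt : ∀ p : ℕ, 1 ≤ p → p + 1 ≤ m → natF f (p - 1) ≠ natF f (p + 1) := by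
        intro p h1 h2 h3
        have hmem : (⟨p, by omega⟩ : Fin (m + 1)) ∈ turnSet f := by
          rw [mem_turnSet]
          exact ⟨by simpa using h1, by simpa using h2, by simpa using h3⟩
        rw [hempty] at hmem
        exact hmem
      exact noturn_case hp hm hW hnt
    have ht2 : 2 ≤ turningNumber f := by omega
    by_cases hTop : ∃ x, 0 < x ∧ x < m ∧ natF f x = n
    · exfalso
      obtain ⟨xs, h1, h2, h3⟩ := hTop
      have hex2 : ∃ p : Fin (m + 1), p ∈ turnSet f ∧ (p : ℕ) ≠ xs := by
        obtain ⟨q, hq1, hq2⟩ := Set.exists_ne_of_one_lt_ncard (s := turnSet f)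
          (by rw [← turningNumber_eq]; omega) (⟨xs, by omega⟩ : Fin (m + 1))
        exact ⟨q, hq1, fun hcc => hq2 (Fin.ext (by simpa using hcc))⟩
      obtain ⟨pf, hpm, hpne⟩ := hex2
      rw [mem_turnSet] at hpm
      exact fold_case hp hW h1 h2 h3 ⟨(pf : ℕ), hpm.1, hpm.2.1, hpm.2.2, hpne⟩
    by_cases hBot : ∃ x, 0 < x ∧ x < m ∧ natF f x = 0
    · exfalso
      obtain ⟨xs, h1, h2, h3⟩ := hBot
      have hp' := prime_rev_left hp
      have hW' : ∀ x, x < m → natF (fun a => rev n (f a)) (x + 1) ≠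
          natF (fun a => rev n (f a)) x := by
        intro x hx hcc
        rw [natF_rev_comp (by omega), natF_rev_comp (by omega)] at hcc
        have h4 := natF_le (f := f) (x := x)
        have h5 := natF_le (f := f) (x := x + 1)
        exact hW x hx (by omega)
      have h3' : natF (fun a => rev n (f a)) xs = n := by
        rw [natF_rev_comp (by omega), h3]
        omega
      have hex2 : ∃ p : Fin (m + 1), p ∈ turnSet (fun a => rev n (f a)) ∧ (p : ℕ) ≠ xs := by
        obtain ⟨q, hq1, hq2⟩ := Set.exists_ne_of_one_lt_ncard
          (s := turnSet (fun a => rev n (f a)))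
          (by rw [← turningNumber_eq, tn_rev_left]; omega) (⟨xs, by omega⟩ : Fin (m + 1))
        exact ⟨q, hq1, fun hcc => hq2 (Fin.ext (by simpa using hcc))⟩
      obtain ⟨pf, hpm, hpne⟩ := hex2
      rw [mem_turnSet] at hpm
      exact fold_case hp' hW' h1 h2 h3' ⟨(pf : ℕ), hpm.1, hpm.2.1, hpm.2.2, hpne⟩
    · push_neg at hTop hBot
      have hn1 : 1 ≤ n := by
        have h1 := hW 0 (by omega)
        have h2 := natF_le (f := f) (x := 0)
        have h3 := natF_le (f := f) (x := 0 + 1)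
        omega
      obtain ⟨z, hz1, hz2⟩ := natF_surj hmor (j := 0) (by omega)
      obtain ⟨w, hw1, hw2⟩ := natF_surj hmor (j := n) le_rfl
      have hz' : z = 0 ∨ z = m := by
        by_contra hc
        push_neg at hc
        exact hBot z (by omega) (by omega) hz2
      have hw' : w = 0 ∨ w = m := by
        by_contra hc
        push_neg at hc
        exact hTop w (by omega) (by omega) hw2
      have hproper : ProperFun f :=
        proper_case (fun x hx1 hx2 => ⟨hBot x hx1 hx2, hTop x hx1 hx2⟩) hn1
      by_cases ht2' : turningNumber f = 2
      · exact Or.inr (Or.inr ⟨hEIF, ht2', hproper⟩)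
      · exfalso
        have ht3 : 3 ≤ turningNumber f := by omega
        rcases hz' with hz0 | hzm
        · have hwm : w = m := by
            rcases hw' with h | h
            · exfalso
              rw [hz0] at hz2
              rw [h] at hw2
              omega
            · exact h
          exact snake_case hp hm hW (hz0 ▸ hz2) (hwm ▸ hw2) ht3
        · have hw0 : w = 0 := by
            rcases hw' with h | h
            · exact h
            · exfalso
              rw [hzm] at hz2
              rw [h] at hw2
              omega
          apply snake_case (prime_rev_right hp) hm
          · intro x hx hcc
            rw [natF_comp_rev (by omega), natF_comp_rev (by omega)] at hcc
            have h9 := hW (m - x - 1) (by omega)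
            rw [show m - x - 1 + 1 = m - x by omega] at h9
            rw [show m - (x + 1) = m - x - 1 by omega] at hcc
            exact h9 hcc.symm
          · rw [natF_comp_rev (by omega), show m - 0 = m by omega]
            exact hzm ▸ hz2
          · rw [natF_comp_rev le_rfl, show m - m = 0 by omega]
            exact hw0 ▸ hw2
          · rw [tn_rev_right]
            exact ht3

end Stmt18Aux

open PathCat in
/-- Every prime in the category `F` of edge-preserving surjective functions between
paths is simple, a hook, or a proper snake. -/
theorem stmt18 {m n : ℕ} (f : Fin (m + 1) → Fin (n + 1)) (hp : IsPrimeF f) :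
    m = n + 1 ∨ (IsEdgeInjFun f ∧ turningNumber f = 1) ∨
      (IsEdgeInjFun f ∧ turningNumber f = 2 ∧ ProperFun f) := by
  exact Stmt18Aux.main f hp
end

section
/- For a relation ← ⊆ Q × Q on a finite path Q, the following are equivalent: (1) ← is bi-surjective (surjective and co-surjective) and connected as a subgraph of Q × Q with the product edge relation; (2) there exist edge-preserving co-bijective relations ⊐, ⊵ ⊆ Q × R from some path R with ← ⊆ ⊐ ∘ ⊴ and =_R ⊆ ⊏ ∘ ← ∘ ⊵; (3) ← = f ∘ g⁻¹ for some edge-preserving surjective functions f, g : R → Q from some path R. -/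
open PathCat

section Aux

lemma adjF_refl {n : ℕ} (i : Fin (n + 1)) : AdjF i i := ⟨Nat.le_succ _, Nat.le_succ _⟩

lemma adjF_symm {n : ℕ} {i j : Fin (n + 1)} (h : AdjF i j) : AdjF j i := ⟨h.2, h.1⟩

lemma rtg_symm {α} {r : α → α → Prop} (hs : ∀ a b, r a b → r b a) {a b : α}
    (h : Relation.ReflTransGen r a b) : Relation.ReflTransGen r b a := by
  induction h with
  | refl => exact .refl
  | tail _ h ih => exact .trans (.single (hs _ _ h)) ih

lemma chain_all {α} {S : α → Prop} {r : α → α → Prop}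
    (hr : ∀ x y, r x y → S y) :
    ∀ (l : List α) (q : α), List.Chain r q l → ∀ p ∈ l, S p := by
  intro l
  induction l with
  | nil => intro q _ p hp; simp at hp
  | cons a t ih =>
    intro q hchain p hp
    simp only [List.Chain, List.chain_cons] at hchain
    rcases List.mem_cons.1 hp with rfl | hp
    · exact hr _ _ hchain.1
    · exact ih a hchain.2 p hp

lemma chain_append' {α} {r : α → α → Prop} :
    ∀ (l₁ : List α) (q : α), List.Chain r q l₁ →
      ∀ l₂, List.Chain r (List.getLast (q :: l₁) (List.cons_ne_nil _ _)) l₂ →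
        List.Chain r q (l₁ ++ l₂) := by
  intro l₁
  induction l₁ with
  | nil => intro q _ l₂ h₂; simpa using h₂
  | cons a t ih =>
    intro q h₁ l₂ h₂
    simp only [List.Chain, List.chain_cons] at h₁
    rw [List.getLast_cons_cons] at h₂
    exact List.chain_cons.2 ⟨h₁.1, ih a h₁.2 l₂ h₂⟩

lemma build_walk {α} {S : α → Prop} {step : α → α → Prop}
    (hconn : ∀ p q, S p → S q → Relation.ReflTransGen step p q)
    (_hstepS : ∀ x y, step x y → S y) :
    ∀ (l : List α) (q : α), S q →
      ∃ w, List.Chain step q w ∧ ∀ p ∈ l, S p → p ∈ q :: w := by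
  intro l
  induction l with
  | nil => intro q _; exact ⟨[], List.Chain.nil, by simp⟩
  | cons p t ih =>
    intro q hq
    by_cases hp : S p
    · obtain ⟨c, hc, hlast⟩ := List.exists_isChain_cons_of_relationReflTransGen (hconn q p hq hp)
      obtain ⟨w', hw', hcov'⟩ := ih p hp
      refine ⟨c ++ w', chain_append' c q hc w' (by rwa [hlast]), ?_⟩
      have hpmem : p ∈ q :: c := hlast ▸ List.getLast_mem _
      intro x hx hSx
      rcases List.mem_cons.1 hx with rfl | hx
      · rcases List.mem_cons.1 hpmem with h | h
        · exact List.mem_cons.2 (Or.inl h)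
        · exact List.mem_cons.2 (Or.inr (List.mem_append.2 (Or.inl h)))
      · rcases List.mem_cons.1 (hcov' x hx hSx) with rfl | h
        · rcases List.mem_cons.1 hpmem with h | h
          · exact List.mem_cons.2 (Or.inl h)
          · exact List.mem_cons.2 (Or.inr (List.mem_append.2 (Or.inl h)))
        · exact List.mem_cons.2 (Or.inr (List.mem_append.2 (Or.inr h)))
    · obtain ⟨w, hw, hcov⟩ := ih q hq
      exact ⟨w, hw, fun x hx hSx => by
        rcases List.mem_cons.1 hx with rfl | hx
        · exact absurd hSx hp
        · exact hcov x hx hSx⟩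

variable {n : ℕ} (L : Fin (n + 1) → Fin (n + 1) → Prop)

lemma two_to_one
    (h : ∃ (m : ℕ) (R₁ R₂ : Fin (n + 1) → Fin (m + 1) → Prop), IsMorRel R₁ ∧ IsMorRel R₂ ∧
        (∀ a b, L a b → ∃ r, R₁ a r ∧ R₂ b r) ∧
        ∀ r, ∃ a b, R₁ a r ∧ R₂ b r ∧ L a b) :
    (∀ a, ∃ b, L a b) ∧ (∀ b, ∃ a, L a b) ∧
        ∀ a b a' b', L a b → L a' b' →
          Relation.ReflTransGen (fun x y : Fin (n + 1) × Fin (n + 1) =>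
            L x.1 x.2 ∧ L y.1 y.2 ∧ AdjF x.1 y.1 ∧ AdjF x.2 y.2) (a, b) (a', b') := by
  obtain ⟨m, R₁, R₂, hR₁, hR₂, hsub, hcov⟩ := h
  choose A B hA hB hL using hcov
  set step := fun x y : Fin (n + 1) × Fin (n + 1) =>
    L x.1 x.2 ∧ L y.1 y.2 ∧ AdjF x.1 y.1 ∧ AdjF x.2 y.2 with hstep
  have hsym : ∀ x y, step x y → step y x := fun x y h =>
    ⟨h.2.1, h.1, adjF_symm h.2.2.1, adjF_symm h.2.2.2⟩
  have stepAB : ∀ s t : Fin (m + 1), AdjF s t → step (A s, B s) (A t, B t) := by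
    intro s t hst
    exact ⟨hL s, hL t, hR₁.1 _ _ _ _ (hA s) hst (hA t), hR₂.1 _ _ _ _ (hB s) hst (hB t)⟩
  have key : ∀ (k : ℕ) (hk : k < m + 1),
      Relation.ReflTransGen step (A ⟨0, Nat.succ_pos m⟩, B ⟨0, Nat.succ_pos m⟩)
        (A ⟨k, hk⟩, B ⟨k, hk⟩) := by
    intro k
    induction k with
    | zero => intro hk; exact .refl
    | succ k ih =>
      intro hk
      have hk' : k < m + 1 := Nat.lt_of_succ_lt hk
      refine (ih hk').tail (stepAB _ _ ?_)
      exact ⟨by simp; omega, by simp⟩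
  have keyAll : ∀ s t : Fin (m + 1),
      Relation.ReflTransGen step (A s, B s) (A t, B t) := by
    intro s t
    have h1 := key s.val s.isLt
    have h2 := key t.val t.isLt
    simp only [Fin.eta] at h1 h2
    exact (rtg_symm hsym h1).trans h2
  refine ⟨?_, ?_, ?_⟩
  · intro a
    obtain ⟨r, hr⟩ := hR₁.2.2 a
    have ha : A r = a := (hr (A r)).mp (hA r)
    exact ⟨B r, ha ▸ hL r⟩
  · intro b
    obtain ⟨r, hr⟩ := hR₂.2.2 b
    have hb : B r = b := (hr (B r)).mp (hB r)
    exact ⟨A r, hb ▸ hL r⟩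
  · intro a b a' b' hab ha'b'
    obtain ⟨r, hr1, hr2⟩ := hsub a b hab
    obtain ⟨r', hr1', hr2'⟩ := hsub a' b' ha'b'
    have s1 : step (a, b) (A r, B r) :=
      ⟨hab, hL r, hR₁.1 _ _ _ _ hr1 (adjF_refl r) (hA r),
        hR₂.1 _ _ _ _ hr2 (adjF_refl r) (hB r)⟩
    have s2 : step (A r', B r') (a', b') :=
      ⟨hL r', ha'b', hR₁.1 _ _ _ _ (hA r') (adjF_refl r') hr1',
        hR₂.1 _ _ _ _ (hB r') (adjF_refl r') hr2'⟩
    exact ((Relation.ReflTransGen.single s1).trans (keyAll r r')).tail s2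

lemma three_to_two
    (h : ∃ (m : ℕ) (f g : Fin (m + 1) → Fin (n + 1)), IsMorF f ∧ IsMorF g ∧
        ∀ a b, L a b ↔ ∃ r, f r = a ∧ g r = b) :
    ∃ (m : ℕ) (R₁ R₂ : Fin (n + 1) → Fin (m + 1) → Prop), IsMorRel R₁ ∧ IsMorRel R₂ ∧
        (∀ a b, L a b → ∃ r, R₁ a r ∧ R₂ b r) ∧
        ∀ r, ∃ a b, R₁ a r ∧ R₂ b r ∧ L a b := by
  obtain ⟨m, f, g, hf, hg, hiff⟩ := h
  have mor : ∀ (f : Fin (m + 1) → Fin (n + 1)), IsMorF f →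
      IsMorRel (fun a r => f r = a) := by
    intro f hf
    refine ⟨?_, ?_, ?_⟩
    · intro i j k l hik hkl hjl
      exact hik ▸ hjl ▸ hf.2 k l hkl
    · intro k; exact ⟨f k, rfl⟩
    · intro i
      obtain ⟨k, hk⟩ := hf.1 i
      exact ⟨k, fun i' => by show f k = i' ↔ i' = i; rw [hk, eq_comm]⟩
  refine ⟨m, fun a r => f r = a, fun b r => g r = b, mor f hf, mor g hg, ?_, ?_⟩
  · intro a b hab
    obtain ⟨r, hr⟩ := (hiff a b).mp hab
    exact ⟨r, hr⟩
  · intro r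
    exact ⟨f r, g r, rfl, rfl, (hiff _ _).mpr ⟨r, rfl, rfl⟩⟩

lemma one_to_three
    (h : (∀ a, ∃ b, L a b) ∧ (∀ b, ∃ a, L a b) ∧
        ∀ a b a' b', L a b → L a' b' →
          Relation.ReflTransGen (fun x y : Fin (n + 1) × Fin (n + 1) =>
            L x.1 x.2 ∧ L y.1 y.2 ∧ AdjF x.1 y.1 ∧ AdjF x.2 y.2) (a, b) (a', b')) :
    ∃ (m : ℕ) (f g : Fin (m + 1) → Fin (n + 1)), IsMorF f ∧ IsMorF g ∧
        ∀ a b, L a b ↔ ∃ r, f r = a ∧ g r = b := by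
  classical
  obtain ⟨htot, hcotot, hconn⟩ := h
  set step := fun x y : Fin (n + 1) × Fin (n + 1) =>
    L x.1 x.2 ∧ L y.1 y.2 ∧ AdjF x.1 y.1 ∧ AdjF x.2 y.2 with hstep
  obtain ⟨b₀, hb₀⟩ := htot 0
  obtain ⟨w, hw, hcov⟩ := build_walk (S := fun p => L p.1 p.2) (step := step)
    (fun p q hp hq => by simpa using hconn p.1 p.2 q.1 q.2 hp hq)
    (fun x y h => h.2.1)
    ((Finset.univ : Finset (Fin (n + 1) × Fin (n + 1))).toList) (0, b₀) hb₀
  have hmemS : ∀ p ∈ (0, b₀) :: w, L p.1 p.2 := by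
    intro p hp
    rcases List.mem_cons.1 hp with rfl | hp
    · exact hb₀
    · exact chain_all (fun x y h => h.2.1) w _ hw p hp
  have hcov' : ∀ p : Fin (n + 1) × Fin (n + 1), L p.1 p.2 → p ∈ (0, b₀) :: w := by
    intro p hp
    exact hcov p (Finset.mem_toList.mpr (Finset.mem_univ p)) hp
  have hchain' : List.Chain' step ((0, b₀) :: w) := hw
  have hget : ∀ (i : ℕ) (h : i < ((0, b₀) :: w).length - 1),
      step (((0, b₀) :: w).get ⟨i, by omega⟩) (((0, b₀) :: w).get ⟨i + 1, by omega⟩) :=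
    fun i h => List.isChain_iff_getElem.mp hchain' i (by simp at h ⊢; omega)
  refine ⟨w.length, fun r => (((0, b₀) :: w).get ⟨r.val, r.isLt⟩).1,
    fun r => (((0, b₀) :: w).get ⟨r.val, r.isLt⟩).2, ⟨?_, ?_⟩, ⟨?_, ?_⟩, ?_⟩
  · intro a
    obtain ⟨b, hab⟩ := htot a
    obtain ⟨i, hi⟩ := List.mem_iff_get.mp (hcov' (a, b) hab)
    exact ⟨i, congrArg Prod.fst hi⟩
  · intro a b hab
    obtain ⟨av, ha⟩ := a
    obtain ⟨bv, hb⟩ := b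
    obtain ⟨h1, h2⟩ := hab
    simp only [Fin.val_mk] at h1 h2
    rcases Nat.lt_trichotomy av bv with h | h | h
    · have hb' : bv = av + 1 := by omega
      subst hb'
      exact (hget av (Nat.lt_of_succ_lt_succ hb)).2.2.1
    · subst h
      exact adjF_refl _
    · have ha' : av = bv + 1 := by omega
      subst ha'
      exact adjF_symm (hget bv (Nat.lt_of_succ_lt_succ ha)).2.2.1
  · intro b
    obtain ⟨a, hab⟩ := hcotot b
    obtain ⟨i, hi⟩ := List.mem_iff_get.mp (hcov' (a, b) hab)
    exact ⟨i, congrArg Prod.snd hi⟩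
  · intro a b hab
    obtain ⟨av, ha⟩ := a
    obtain ⟨bv, hb⟩ := b
    obtain ⟨h1, h2⟩ := hab
    simp only [Fin.val_mk] at h1 h2
    rcases Nat.lt_trichotomy av bv with h | h | h
    · have hb' : bv = av + 1 := by omega
      subst hb'
      exact (hget av (Nat.lt_of_succ_lt_succ hb)).2.2.2
    · subst h
      exact adjF_refl _
    · have ha' : av = bv + 1 := by omega
      subst ha'
      exact adjF_symm (hget bv (Nat.lt_of_succ_lt_succ ha)).2.2.2
  · intro a b
    constructor
    · intro hab
      obtain ⟨i, hi⟩ := List.mem_iff_get.mp (hcov' (a, b) hab)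
      exact ⟨i, congrArg Prod.fst hi, congrArg Prod.snd hi⟩
    · rintro ⟨r, hr1, hr2⟩
      subst hr1
      subst hr2
      exact hmemS _ (List.get_mem _ _)

end Aux

open PathCat in
/-- Characterisations of bi-surjective connected relations on a path. -/
theorem stmt19 {n : ℕ} (L : Fin (n + 1) → Fin (n + 1) → Prop) :
    (((∀ a, ∃ b, L a b) ∧ (∀ b, ∃ a, L a b) ∧
        ∀ a b a' b', L a b → L a' b' →
          Relation.ReflTransGen (fun x y : Fin (n + 1) × Fin (n + 1) =>
            L x.1 x.2 ∧ L y.1 y.2 ∧ AdjF x.1 y.1 ∧ AdjF x.2 y.2) (a, b) (a', b')) ↔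
      (∃ (m : ℕ) (R₁ R₂ : Fin (n + 1) → Fin (m + 1) → Prop), IsMorRel R₁ ∧ IsMorRel R₂ ∧
        (∀ a b, L a b → ∃ r, R₁ a r ∧ R₂ b r) ∧
        ∀ r, ∃ a b, R₁ a r ∧ R₂ b r ∧ L a b)) ∧
    ((∃ (m : ℕ) (R₁ R₂ : Fin (n + 1) → Fin (m + 1) → Prop), IsMorRel R₁ ∧ IsMorRel R₂ ∧
        (∀ a b, L a b → ∃ r, R₁ a r ∧ R₂ b r) ∧
        ∀ r, ∃ a b, R₁ a r ∧ R₂ b r ∧ L a b) ↔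
      ∃ (m : ℕ) (f g : Fin (m + 1) → Fin (n + 1)), IsMorF f ∧ IsMorF g ∧
        ∀ a b, L a b ↔ ∃ r, f r = a ∧ g r = b) := by
  constructor
  · exact ⟨fun h => three_to_two L (one_to_three L h), two_to_one L⟩
  · exact ⟨fun h => one_to_three L (two_to_one L h), three_to_two L⟩
end
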